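/- arXiv:1511.03234 — 4 statements merged into one kernel-verified Lean document; each statement's English description precedes it below -/
import Mathlib

section
/- Let 𝒥 = (M, λ, τ) be a reduction structure possessing an ordered substructure (so 𝒥 is weakly noetherian over every coefficient ring). Then there exists a finite set G ⊆ 𝒯 × M such that for every commutative ring A and every marked set F on 𝒥 over A: F is a marked basis if and only if for every (x^η, x^α) ∈ G and every reduced l with x^η f_α →_* l, one has l = 0. -/
open MvPolynomial

/-- Terms (monomials) in `n` variables, identified with their exponent vectors. -/
abbrev Term (n : ℕ) := Fin n →₀ ℕ

/-- A reduction structure `𝒥 = (M, λ, τ)`. -/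
structure RedStruct (n : ℕ) where
  M : Finset (Term n)
  tau : Term n → Set (Term n)
  lam : Term n → Finset (Term n)
  tau_orderIdeal : ∀ α ∈ M, ∀ η ∈ tau α, ∀ η' : Term n, η' ≤ η → η' ∈ tau α
  cover : ∀ β : Term n, (∃ α ∈ M, ∃ η, β = α + η) ↔ (∃ α ∈ M, ∃ η ∈ tau α, β = α + η)
  lam_tail : ∀ α ∈ M, ∀ γ ∈ lam α, ¬ ∃ η ∈ tau α, γ = α + η

namespace RedStruct

variable {n : ℕ}

/-- The cone of `x^α`. -/
def cone (𝒥 : RedStruct n) (α : Term n) : Set (Term n) := {β | ∃ η ∈ 𝒥.tau α, β = α + η}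

/-- The semigroup ideal `J` generated by `M`. -/
def idealJ (𝒥 : RedStruct n) : Set (Term n) := {β | ∃ α ∈ 𝒥.M, ∃ η, β = α + η}

def hasMaximalCones (𝒥 : RedStruct n) : Prop := ∀ α ∈ 𝒥.M, 𝒥.tau α = Set.univ

def hasDisjointCones (𝒥 : RedStruct n) : Prop :=
  ∀ α ∈ 𝒥.M, ∀ α' ∈ 𝒥.M, α ≠ α' → 𝒥.cone α ∩ 𝒥.cone α' = ∅

/-- `𝒥'` is a substructure of `𝒥`: same `M`, same tails, smaller multiplicative sets. -/
def IsSubstructure (𝒥' 𝒥 : RedStruct n) : Prop :=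
  𝒥'.M = 𝒥.M ∧ 𝒥'.lam = 𝒥.lam ∧ ∀ α ∈ 𝒥.M, 𝒥'.tau α ⊆ 𝒥.tau α

/-- An ordered reduction structure: there are a well-founded strictly (partially) ordered set
`(W, ≺)` and an ordering function `φ` with `φ(x^{γ+η}) ≺ φ(x^{α+η})` for all `x^α ∈ M`,
`x^γ ∈ λ_α`, `x^η ∈ τ_α`. -/
def IsOrdered (𝒥 : RedStruct n) : Prop :=
  ∃ (W : Type) (lt : W → W → Prop) (φ : Term n → W),
    IsStrictOrder W lt ∧ WellFounded lt ∧
      ∀ α ∈ 𝒥.M, ∀ γ ∈ 𝒥.lam α, ∀ η ∈ 𝒥.tau α, lt (φ (γ + η)) (φ (α + η))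

end RedStruct

variable {n : ℕ}

/-- A marked set on `𝒥` over the ring `A`: each `f_α = x^α + Σ_{γ ∈ λ_α} c γ x^γ`. -/
def IsMarkedSet {A : Type*} [CommRing A] (𝒥 : RedStruct n)
    (F : Term n → MvPolynomial (Fin n) A) : Prop :=
  ∀ α ∈ 𝒥.M, MvPolynomial.coeff α (F α) = 1 ∧
    ∀ β : Term n, MvPolynomial.coeff β (F α) ≠ 0 → β = α ∨ β ∈ 𝒥.lam α

/-- One base step of reduction, allowing multipliers from the family `σ`. -/
def RedStep {A : Type*} [CommRing A] (𝒥 : RedStruct n) (σ : Term n → Set (Term n))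
    (F : Term n → MvPolynomial (Fin n) A) (g h : MvPolynomial (Fin n) A) : Prop :=
  ∃ α ∈ 𝒥.M, ∃ η ∈ σ α, MvPolynomial.coeff (α + η) g ≠ 0 ∧
    h = g - MvPolynomial.monomial η (MvPolynomial.coeff (α + η) g) * F α

/-- The reduction relation `→_{F𝒥}`. -/
def Red {A : Type*} [CommRing A] (𝒥 : RedStruct n) (F : Term n → MvPolynomial (Fin n) A) :
    MvPolynomial (Fin n) A → MvPolynomial (Fin n) A → Prop :=
  RedStep 𝒥 𝒥.tau F

/-- The reflexive-transitive closure `→_*` of `→_{F𝒥}`. -/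
def RedStar {A : Type*} [CommRing A] (𝒥 : RedStruct n) (F : Term n → MvPolynomial (Fin n) A) :
    MvPolynomial (Fin n) A → MvPolynomial (Fin n) A → Prop :=
  Relation.ReflTransGen (Red 𝒥 F)

/-- A polynomial is reduced if its support is contained in `N(J)`. -/
def IsReducedPoly {A : Type*} [CommRing A] (𝒥 : RedStruct n)
    (l : MvPolynomial (Fin n) A) : Prop :=
  ∀ β ∈ l.support, β ∉ 𝒥.idealJ

/-- A relation is noetherian: there is no infinite chain of steps. -/
def RelNoetherian {X : Type*} (r : X → X → Prop) : Prop :=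
  ¬ ∃ f : ℕ → X, ∀ i, r (f i) (f (i + 1))

/-- `𝒥` is noetherian over `A`: for every marked set `F` on `𝒥` over `A`, every sequence
of `→_{F𝒥}` reduction steps terminates. -/
def RedStruct.IsNoetherianOver (𝒥 : RedStruct n) (A : Type*) [CommRing A] : Prop :=
  ∀ F : Term n → MvPolynomial (Fin n) A, IsMarkedSet 𝒥 F → RelNoetherian (Red 𝒥 F)

/-- `𝒥` is weakly noetherian over `A`: it has a noetherian substructure. -/
def RedStruct.IsWeaklyNoetherianOver (𝒥 : RedStruct n) (A : Type*) [CommRing A] : Prop :=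
  ∃ 𝒥' : RedStruct n, RedStruct.IsSubstructure 𝒥' 𝒥 ∧ 𝒥'.IsNoetherianOver A

/-- The set `σF = {x^η f_α : x^α ∈ M, x^η ∈ σ_α}`. -/
def tauF {A : Type*} [CommRing A] (𝒥 : RedStruct n) (σ : Term n → Set (Term n))
    (F : Term n → MvPolynomial (Fin n) A) : Set (MvPolynomial (Fin n) A) :=
  {p | ∃ α ∈ 𝒥.M, ∃ η ∈ σ α, p = MvPolynomial.monomial η (1 : A) * F α}

/-- The `A`-submodule `⟨σF⟩` generated by `σF`. -/
noncomputable def tauSpan {A : Type*} [CommRing A] (𝒥 : RedStruct n) (σ : Term n → Set (Term n))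
    (F : Term n → MvPolynomial (Fin n) A) : Submodule A (MvPolynomial (Fin n) A) :=
  Submodule.span A (tauF 𝒥 σ F)

/-- The `A`-submodule `⟨N(J)⟩` spanned by the terms outside `J`. -/
noncomputable def NJSpan (𝒥 : RedStruct n) (A : Type*) [CommRing A] :
    Submodule A (MvPolynomial (Fin n) A) :=
  Submodule.span A {p | ∃ β ∉ 𝒥.idealJ, p = MvPolynomial.monomial β (1 : A)}

/-- `F` is a marked basis: `(F) ⊕ ⟨N(J)⟩ = P` as `A`-modules. -/
def IsMarkedBasis {A : Type*} [CommRing A] (𝒥 : RedStruct n)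
    (F : Term n → MvPolynomial (Fin n) A) : Prop :=
  IsCompl (Submodule.restrictScalars A (Ideal.span (F '' ↑𝒥.M))) (NJSpan 𝒥 A)

/-- A representation of `g` by `σF`: `g = Σ c_(α,η) · x^η f_α` over finitely many
distinct pairs `(α, η)` with `x^α ∈ M`, `x^η ∈ σ_α` and nonzero coefficients. -/
def IsRepr {A : Type*} [CommRing A] (𝒥 : RedStruct n) (σ : Term n → Set (Term n))
    (F : Term n → MvPolynomial (Fin n) A) (c : (Term n × Term n) →₀ A)
    (g : MvPolynomial (Fin n) A) : Prop :=
  (∀ p ∈ c.support, p.1 ∈ 𝒥.M ∧ p.2 ∈ σ p.1) ∧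
    g = c.sum fun p a => MvPolynomial.monomial p.2 a * F p.1

/-- The S-polynomial `S(f_β, f_α) = (lcm(x^α,x^β)/x^α) f_α − (lcm(x^α,x^β)/x^β) f_β`,
written `SPoly F α β`. -/
noncomputable def SPoly {A : Type*} [CommRing A] (F : Term n → MvPolynomial (Fin n) A) (α β : Term n) :
    MvPolynomial (Fin n) A :=
  MvPolynomial.monomial ((α ⊔ β) - α) (1 : A) * F α -
    MvPolynomial.monomial ((α ⊔ β) - β) (1 : A) * F β


namespace Stmt13Aux

open Classical in
noncomputable section


variable {W : Type*} (lt : W → W → Prop)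

/-- One-step Dershowitz–Manna-like relation with slack: `N` is obtained from `M` by
removing one occurrence of some `x`, adding finitely many elements all `lt`-below `x`,
and possibly dropping further elements. -/
def DMStep (N M : Multiset W) : Prop :=
  ∃ (M₀ Y : Multiset W) (x : W), M = x ::ₘ M₀ ∧ N ≤ M₀ + Y ∧ ∀ y ∈ Y, lt y x

variable {lt}

lemma dmStep_of_le {N N' M : Multiset W} (h : N' ≤ N) (hNM : DMStep lt N M) :
    DMStep lt N' M := by
  obtain ⟨M₀, Y, x, h1, h2, h3⟩ := hNM
  exact ⟨M₀, Y, x, h1, le_trans h h2, h3⟩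

lemma acc_of_le {N M : Multiset W} (h : N ≤ M) (hM : Acc (DMStep lt) M) :
    Acc (DMStep lt) N := by
  rcases eq_or_lt_of_le h with rfl | hlt
  · exact hM
  · refine hM.inv (y := N) ?_
    have hne : N ≠ M := ne_of_lt hlt
    have : ∃ x, N.count x < M.count x := by
      by_contra hc
      push_neg at hc
      exact hne (le_antisymm h (Multiset.le_iff_count.2 hc))
    obtain ⟨x, hx⟩ := this
    have hxM : x ∈ M := by
      rw [← Multiset.count_pos]; omega
    refine ⟨M.erase x, 0, x, (Multiset.cons_erase hxM).symm, ?_, by simp⟩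
    rw [add_zero, Multiset.le_iff_count]
    intro a
    by_cases hax : a = x
    · subst hax
      rw [Multiset.count_erase_self]
      omega
    · rw [Multiset.count_erase_of_ne hax]
      exact Multiset.le_iff_count.1 h a

lemma acc_cons (hwf : WellFounded lt) :
    ∀ x : W, ∀ M : Multiset W, Acc (DMStep lt) M → Acc (DMStep lt) (x ::ₘ M) := by
  intro x
  induction x using hwf.induction with
  | _ x ihx =>
    intro M hM
    induction hM with
    | _ M hM ihM =>
      have hMacc : Acc (DMStep lt) M := Acc.intro M hM
      constructor
      intro N hN
      obtain ⟨M₀, Y, z, h1, h2, h3⟩ := hN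
      rcases Multiset.cons_eq_cons.1 h1 with ⟨rfl, rfl⟩ | ⟨hne, cs, hM₀, hMcs⟩
      · -- removed the head `x`
        have hacc : ∀ Y' : Multiset W, (∀ y ∈ Y', lt y x) →
            ∀ K : Multiset W, Acc (DMStep lt) K → Acc (DMStep lt) (K + Y') := by
          intro Y'
          induction Y' using Multiset.induction with
          | empty => intro _ K hK; simpa using hK
          | cons y Y' ih =>
            intro hY' K hK
            have : K + (y ::ₘ Y') = y ::ₘ (K + Y') := by
              rw [Multiset.add_cons]
            rw [this]
            exact ihx y (hY' y (Multiset.mem_cons_self _ _))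
              _ (ih (fun a ha => hY' a (Multiset.mem_cons_of_mem ha)) K hK)
        exact acc_of_le h2 (hacc Y h3 _ hMacc)
      · -- removed an element of `M`
        subst hM₀; subst hMcs
        have hstep : DMStep lt (cs + Y) (z ::ₘ cs) := ⟨cs, Y, z, rfl, le_rfl, h3⟩
        have := ihM _ hstep
        refine acc_of_le ?_ this
        calc N ≤ (x ::ₘ cs) + Y := h2
        _ = x ::ₘ (cs + Y) := by rw [Multiset.cons_add]

theorem dmStep_wf (hwf : WellFounded lt) : WellFounded (DMStep lt) := by
  constructor
  intro M
  induction M using Multiset.induction with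
  | empty =>
    constructor
    intro N hN
    obtain ⟨M₀, Y, x, h1, -, -⟩ := hN
    exact absurd h1.symm (Multiset.cons_ne_zero)
  | cons x M ih => exact acc_cons hwf x M ih

end
end Stmt13Aux
/-! ### Auxiliary development for `stmt13` -/

namespace Stmt13Aux

open MvPolynomial



section Lists

variable {n : ℕ} {A : Type*} [CommRing A]



variable (n) (A) in
noncomputable def entryDecEq : DecidableEq ((Term n × Term n) × A) := Classical.decEq _

attribute [local instance 5000] entryDecEq

/-- The polynomial represented by a list of entries `((β, δ), a)`, each standing for
`a • x^δ • f_β`. -/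
noncomputable def sumList (F : Term n → MvPolynomial (Fin n) A) (L : List ((Term n × Term n) × A)) :
    MvPolynomial (Fin n) A :=
  (L.map fun e => MvPolynomial.monomial e.1.2 e.2 * F e.1.1).sum

@[simp] lemma sumList_nil (F : Term n → MvPolynomial (Fin n) A) : sumList F [] = 0 := rfl

lemma sumList_cons (F : Term n → MvPolynomial (Fin n) A) (e) (L) :
    sumList F (e :: L) = MvPolynomial.monomial e.1.2 e.2 * F e.1.1 + sumList F L := by
  simp [sumList]

lemma sumList_append (F : Term n → MvPolynomial (Fin n) A) (L₁ L₂) :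
    sumList F (L₁ ++ L₂) = sumList F L₁ + sumList F L₂ := by
  simp [sumList]

lemma sumList_perm (F : Term n → MvPolynomial (Fin n) A) {L₁ L₂} (h : L₁.Perm L₂) :
    sumList F L₁ = sumList F L₂ :=
  (h.map _).sum_eq

lemma sumList_erase (F : Term n → MvPolynomial (Fin n) A) {L} {e} (he : e ∈ L) :
    sumList F L = MvPolynomial.monomial e.1.2 e.2 * F e.1.1 + sumList F (L.erase e) := by
  rw [sumList_perm F (List.perm_cons_erase he), sumList_cons]

lemma sumList_smul (F : Term n → MvPolynomial (Fin n) A) (a : A) (L) :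
    sumList F (L.map fun e => (e.1, a * e.2)) = MvPolynomial.C a * sumList F L := by
  induction L with
  | nil => simp
  | cons e L ih =>
    rw [List.map_cons, sumList_cons, sumList_cons, mul_add, ih]
    congr 1
    rw [← mul_assoc, C_mul_monomial]

lemma sumList_monomial_mul (F : Term n → MvPolynomial (Fin n) A) (η : Term n) (c : A) (L) :
    sumList F (L.map fun e => ((e.1.1, η + e.1.2), c * e.2)) =
      MvPolynomial.monomial η c * sumList F L := by
  induction L with
  | nil => simp
  | cons e L ih =>
    rw [List.map_cons, sumList_cons, sumList_cons, mul_add, ih]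
    congr 1
    rw [← mul_assoc, monomial_mul]

end Lists

end Stmt13Aux
namespace Stmt13Aux

open MvPolynomial

section Main

variable {n : ℕ} {𝒥 𝒥' : RedStruct n}
variable {W : Type} {lt : W → W → Prop} {φ : Term n → W}
variable {A : Type*} [CommRing A] {F : Term n → MvPolynomial (Fin n) A}

lemma idealJ_eq (hsub : RedStruct.IsSubstructure 𝒥' 𝒥) : 𝒥'.idealJ = 𝒥.idealJ := by
  unfold RedStruct.idealJ
  rw [hsub.1]

lemma red_mono (hsub : RedStruct.IsSubstructure 𝒥' 𝒥) {g h : MvPolynomial (Fin n) A}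
    (hr : Red 𝒥' F g h) : Red 𝒥 F g h := by
  obtain ⟨β, hβ, δ, hδ, hc, he⟩ := hr
  exact ⟨β, hsub.1 ▸ hβ, δ, hsub.2.2 β (hsub.1 ▸ hβ) hδ, hc, he⟩

lemma redstar_mono (hsub : RedStruct.IsSubstructure 𝒥' 𝒥) {g h : MvPolynomial (Fin n) A}
    (hr : Relation.ReflTransGen (Red 𝒥' F) g h) : RedStar 𝒥 F g h :=
  Relation.ReflTransGen.mono (fun _ _ => red_mono hsub) _ _ hr

/-- Analysis of one reduction step. -/
lemma step_analysis (hsub : RedStruct.IsSubstructure 𝒥' 𝒥)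
    (hcompat : ∀ α ∈ 𝒥'.M, ∀ γ ∈ 𝒥'.lam α, ∀ η ∈ 𝒥'.tau α, lt (φ (γ + η)) (φ (α + η)))
    (hF : IsMarkedSet 𝒥 F)
    {g : MvPolynomial (Fin n) A} {β δ : Term n} (hβ : β ∈ 𝒥'.M) (hδ : δ ∈ 𝒥'.tau β)
    {c : A} (hc : c = MvPolynomial.coeff (β + δ) g) :
    ∀ v ∈ (g - MvPolynomial.monomial δ c * F β).support,
      v ≠ β + δ ∧ (v ∈ g.support ∨ lt (φ v) (φ (β + δ))) ∧
        (v ∈ g.support ∨ ∃ γ ∈ 𝒥.lam β, v = γ + δ) := by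
  intro v hv
  have hβM : β ∈ 𝒥.M := hsub.1 ▸ hβ
  have hcoeffv : MvPolynomial.coeff v (g - MvPolynomial.monomial δ c * F β) =
      MvPolynomial.coeff v g - (if δ ≤ v then c * MvPolynomial.coeff (v - δ) (F β) else 0) := by
    rw [MvPolynomial.coeff_sub, MvPolynomial.coeff_monomial_mul']
  have hvne : MvPolynomial.coeff v (g - MvPolynomial.monomial δ c * F β) ≠ 0 :=
    MvPolynomial.mem_support_iff.1 hv
  have hne : v ≠ β + δ := by
    rintro rfl
    apply hvne
    rw [hcoeffv, if_pos le_add_self, add_tsub_cancel_right, (hF β hβM).1, mul_one, ← hc, sub_self]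
  refine ⟨hne, ?_⟩
  by_cases hvg : v ∈ g.support
  · exact ⟨Or.inl hvg, Or.inl hvg⟩
  · have h0 : MvPolynomial.coeff v g = 0 := by
      simpa [MvPolynomial.mem_support_iff] using hvg
    rw [hcoeffv, h0, zero_sub, neg_ne_zero] at hvne
    have hle : δ ≤ v := by
      by_contra hcon
      rw [if_neg hcon] at hvne
      exact hvne rfl
    rw [if_pos hle] at hvne
    have hcoeffFβ : MvPolynomial.coeff (v - δ) (F β) ≠ 0 := by
      intro h0'
      rw [h0', mul_zero] at hvne
      exact hvne rfl
    rcases (hF β hβM).2 _ hcoeffFβ with h1 | h2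
    · exfalso
      apply hne
      rw [← tsub_add_cancel_of_le hle, h1, add_comm]
    · have hveq : v = (v - δ) + δ := by
        rw [tsub_add_cancel_of_le hle]
      refine ⟨Or.inr ?_, Or.inr ⟨v - δ, h2, hveq⟩⟩
      rw [hveq]
      exact hcompat β hβ _ (by rw [hsub.2.1]; exact h2) δ hδ

/-- The multiset measure of a polynomial. -/
noncomputable def pmeasure (φ : Term n → W) (g : MvPolynomial (Fin n) A) : Multiset W :=
  Multiset.map φ g.support.val

lemma step_dm (hsub : RedStruct.IsSubstructure 𝒥' 𝒥)
    (hcompat : ∀ α ∈ 𝒥'.M, ∀ γ ∈ 𝒥'.lam α, ∀ η ∈ 𝒥'.tau α, lt (φ (γ + η)) (φ (α + η)))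
    (hF : IsMarkedSet 𝒥 F)
    {g h : MvPolynomial (Fin n) A} (hr : Red 𝒥' F g h) :
    DMStep (Relation.TransGen lt) (pmeasure φ h) (pmeasure φ g) := by
  classical
  obtain ⟨β, hβ, δ, hδ, hc, he⟩ := hr
  set u := β + δ with hu
  have hug : u ∈ g.support := MvPolynomial.mem_support_iff.2 hc
  have hanalysis := step_analysis hsub hcompat hF hβ hδ (rfl :
    MvPolynomial.coeff (β + δ) g = MvPolynomial.coeff (β + δ) g) (g := g)
  refine ⟨Multiset.map φ (g.support.val.erase u),
    Multiset.map φ ((h.support.filter (fun v => v ∉ g.support)).val), φ u, ?_, ?_, ?_⟩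
  · rw [pmeasure, ← Multiset.map_cons, Multiset.cons_erase (Finset.mem_def.1 hug)]
  · -- `h.support ≤ erase u (supp g) + new`
    have hsub1 : h.support.val ≤ (g.support.erase u).val + (h.support.filter (fun v => v ∉ g.support)).val := by
      refine le_trans ?_ (Multiset.union_le_add _ _)
      rw [← Finset.union_val]
      rw [Finset.val_le_iff]
      intro v hvsup
      have := hanalysis v (he ▸ hvsup)
      by_cases hvg : v ∈ g.support
      · exact Finset.mem_union.2 (Or.inl (Finset.mem_erase.2 ⟨this.1, hvg⟩))
      · exact Finset.mem_union.2 (Or.inr (Finset.mem_filter.2 ⟨hvsup, hvg⟩))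
    calc pmeasure φ h ≤ Multiset.map φ ((g.support.erase u).val + (h.support.filter (fun v => v ∉ g.support)).val) := Multiset.map_le_map hsub1
    _ = Multiset.map φ (g.support.val.erase u) + _ := by
        rw [Multiset.map_add, Finset.erase_val]
  · intro y hy
    obtain ⟨v, hv, rfl⟩ := Multiset.mem_map.1 hy
    have hv' := Finset.mem_filter.1 (Finset.mem_def.2 hv)
    have := hanalysis v (he ▸ hv'.1)
    rcases this.2.1 with h1 | h2
    · exact absurd h1 hv'.2
    · exact Relation.TransGen.single h2

lemma multiset_union_le_add : True := trivial

end Main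

end Stmt13Aux
namespace Stmt13Aux

open MvPolynomial

section Main2

variable {n : ℕ} {𝒥 𝒥' : RedStruct n}
variable {W : Type} {lt : W → W → Prop} {φ : Term n → W}
variable {A : Type*} [CommRing A] {F : Term n → MvPolynomial (Fin n) A}

lemma redrev_wf (hsub : RedStruct.IsSubstructure 𝒥' 𝒥) (hwf : WellFounded lt)
    (hcompat : ∀ α ∈ 𝒥'.M, ∀ γ ∈ 𝒥'.lam α, ∀ η ∈ 𝒥'.tau α, lt (φ (γ + η)) (φ (α + η)))
    (hF : IsMarkedSet 𝒥 F) :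
    WellFounded (fun h g : MvPolynomial (Fin n) A => Red 𝒥' F g h) := by
  have hbase : WellFounded (InvImage (DMStep (Relation.TransGen lt))
      (pmeasure φ (A := A) (n := n))) :=
    InvImage.wf _ (dmStep_wf hwf.transGen)
  exact Subrelation.wf (fun {h g} hr => step_dm hsub hcompat hF hr) hbase

lemma exists_nf (hsub : RedStruct.IsSubstructure 𝒥' 𝒥) (hwf : WellFounded lt)
    (hcompat : ∀ α ∈ 𝒥'.M, ∀ γ ∈ 𝒥'.lam α, ∀ η ∈ 𝒥'.tau α, lt (φ (γ + η)) (φ (α + η)))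
    (hF : IsMarkedSet 𝒥 F) (g : MvPolynomial (Fin n) A) :
    ∃ l, Relation.ReflTransGen (Red 𝒥' F) g l ∧ IsReducedPoly 𝒥 l := by
  induction g using (redrev_wf hsub hwf hcompat hF).induction with
  | _ g ih =>
    by_cases hg : IsReducedPoly 𝒥 g
    · exact ⟨g, Relation.ReflTransGen.refl, hg⟩
    · unfold IsReducedPoly at hg
      push_neg at hg
      obtain ⟨v, hvsup, hvJ⟩ := hg
      rw [← idealJ_eq hsub] at hvJ
      obtain ⟨β, hβ, δ, hδ, hveq⟩ := (𝒥'.cover v).1 hvJ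
      have hc : MvPolynomial.coeff (β + δ) g ≠ 0 := by
        rw [← hveq]; exact MvPolynomial.mem_support_iff.1 hvsup
      have hstep : Red 𝒥' F g (g - MvPolynomial.monomial δ (MvPolynomial.coeff (β + δ) g) * F β) :=
        ⟨β, hβ, δ, hδ, hc, rfl⟩
      obtain ⟨l, hl1, hl2⟩ := ih _ hstep
      exact ⟨l, Relation.ReflTransGen.head hstep hl1, hl2⟩

lemma unwind (hsub : RedStruct.IsSubstructure 𝒥' 𝒥)
    (hcompat : ∀ α ∈ 𝒥'.M, ∀ γ ∈ 𝒥'.lam α, ∀ η ∈ 𝒥'.tau α, lt (φ (γ + η)) (φ (α + η)))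
    (hF : IsMarkedSet 𝒥 F) {S : Set (Term n)}
    (hS : ∀ β ∈ 𝒥'.M, ∀ δ ∈ 𝒥'.tau β, (β + δ) ∈ S → ∀ γ ∈ 𝒥.lam β, (γ + δ) ∈ S)
    {g l : MvPolynomial (Fin n) A} (hred : Relation.ReflTransGen (Red 𝒥' F) g l) :
    (∀ v ∈ g.support, v ∈ S) →
    (∀ v ∈ l.support, v ∈ S) ∧
      ∃ L : List ((Term n × Term n) × A),
        (∀ e ∈ L, e.1.1 ∈ 𝒥.M ∧ e.1.2 ∈ 𝒥'.tau e.1.1 ∧ e.1.1 + e.1.2 ∈ S) ∧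
        g = sumList F L + l := by
  induction hred using Relation.ReflTransGen.head_induction_on with
  | refl =>
    intro hgS
    exact ⟨hgS, [], by simp, by simp⟩
  | head hstep _ ih =>
    rename_i g m _
    intro hgS
    obtain ⟨β, hβ, δ, hδ, hc, he⟩ := hstep
    have hβM : β ∈ 𝒥.M := hsub.1 ▸ hβ
    have huS : β + δ ∈ S := hgS _ (MvPolynomial.mem_support_iff.2 hc)
    have hmS : ∀ v ∈ m.support, v ∈ S := by
      intro v hv
      rcases (step_analysis hsub hcompat hF hβ hδ rfl v (he ▸ hv)).2.2 with h1 | ⟨γ, hγ, rfl⟩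
      · exact hgS v h1
      · exact hS β hβ δ hδ huS γ hγ
    obtain ⟨hlS, L, hL, heq⟩ := ih hmS
    refine ⟨hlS, ((β, δ), MvPolynomial.coeff (β + δ) g) :: L, ?_, ?_⟩
    · intro e he
      rcases List.mem_cons.1 he with rfl | heL
      · exact ⟨hβM, hδ, huS⟩
      · exact hL e heL
    · rw [sumList_cons, add_assoc, ← heq, he]
      ring

lemma sumList_mem_ideal {L : List ((Term n × Term n) × A)} (hL : ∀ e ∈ L, e.1.1 ∈ 𝒥.M)
    (F : Term n → MvPolynomial (Fin n) A) :
    sumList F L ∈ Ideal.span (F '' ↑𝒥.M) := by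
  induction L with
  | nil => simp only [sumList_nil]; exact Ideal.zero_mem _
  | cons e L ih =>
    rw [sumList_cons]
    refine Ideal.add_mem _ (Ideal.mul_mem_left _ _ (Ideal.subset_span ?_))
      (ih fun e' he' => hL e' (List.mem_cons_of_mem _ he'))
    exact ⟨e.1.1, by simpa using hL e (List.mem_cons_self), rfl⟩

lemma mul_sumList_rep (q : MvPolynomial (Fin n) A) (F : Term n → MvPolynomial (Fin n) A)
    (L : List ((Term n × Term n) × A)) (hL : ∀ e ∈ L, e.1.1 ∈ 𝒥.M) :
    ∃ L' : List ((Term n × Term n) × A), (∀ e ∈ L', e.1.1 ∈ 𝒥.M) ∧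
      q * sumList F L = sumList F L' := by
  induction q using MvPolynomial.induction_on' with
  | monomial u a =>
    refine ⟨L.map fun e => ((e.1.1, u + e.1.2), a * e.2), ?_, (sumList_monomial_mul F u a L).symm⟩
    intro e' he'
    obtain ⟨e, heL, rfl⟩ := List.mem_map.1 he'
    exact hL e heL
  | add p q ihp ihq =>
    obtain ⟨L₁, hL₁, h₁⟩ := ihp
    obtain ⟨L₂, hL₂, h₂⟩ := ihq
    refine ⟨L₁ ++ L₂, ?_, ?_⟩
    · intro e he
      rcases List.mem_append.1 he with h | h
      · exact hL₁ e h
      · exact hL₂ e h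
    · rw [sumList_append, add_mul, h₁, h₂]

lemma exists_rep_of_mem_ideal {g : MvPolynomial (Fin n) A}
    (F : Term n → MvPolynomial (Fin n) A)
    (hg : g ∈ Ideal.span (F '' ↑𝒥.M)) :
    ∃ L : List ((Term n × Term n) × A), (∀ e ∈ L, e.1.1 ∈ 𝒥.M) ∧ g = sumList F L := by
  refine Submodule.span_induction ?_ ?_ ?_ ?_ hg
  · rintro x ⟨β, hβ, rfl⟩
    refine ⟨[((β, 0), 1)], ?_, ?_⟩
    · intro e he
      rcases List.mem_cons.1 he with rfl | h
      · simpa using hβ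
      · simp at h
    · simp [sumList]
  · exact ⟨[], by simp, by simp⟩
  · rintro x y _ _ ⟨L₁, hL₁, rfl⟩ ⟨L₂, hL₂, rfl⟩
    refine ⟨L₁ ++ L₂, ?_, (sumList_append F L₁ L₂).symm⟩
    intro e he
    rcases List.mem_append.1 he with h | h
    · exact hL₁ e h
    · exact hL₂ e h
  · rintro q x _ ⟨L, hL, rfl⟩
    obtain ⟨L', hL', h'⟩ := mul_sumList_rep q F L hL
    exact ⟨L', hL', by rw [smul_eq_mul, h']⟩

lemma mem_NJSpan_of_reduced {l : MvPolynomial (Fin n) A} (hl : IsReducedPoly 𝒥 l) :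
    l ∈ NJSpan 𝒥 A := by
  rw [l.as_sum]
  refine Submodule.sum_mem _ fun v hv => ?_
  have h1 : MvPolynomial.monomial v (MvPolynomial.coeff v l) =
      (MvPolynomial.coeff v l) • MvPolynomial.monomial v (1 : A) := by
    rw [MvPolynomial.smul_monomial, smul_eq_mul, mul_one]
  rw [h1]
  exact Submodule.smul_mem _ _ (Submodule.subset_span ⟨v, hl v hv, rfl⟩)

lemma supp_of_mem_NJSpan {l : MvPolynomial (Fin n) A} (hl : l ∈ NJSpan 𝒥 A) :
    ∀ v ∈ l.support, v ∉ 𝒥.idealJ := by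
  refine Submodule.span_induction ?_ ?_ ?_ ?_ hl
  · rintro x ⟨β, hβ, rfl⟩ v hv
    have := MvPolynomial.support_monomial_subset hv
    simp only [Finset.mem_singleton] at this
    rwa [this]
  · simp
  · intro x y _ _ hx hy v hv
    rcases Finset.mem_union.1 (MvPolynomial.support_add hv) with h | h
    · exact hx v h
    · exact hy v h
  · intro a x _ hx v hv
    exact hx v (MvPolynomial.support_smul hv)

end Main2

end Stmt13Aux
namespace Stmt13Aux

open MvPolynomial

section Claim

variable {n : ℕ} {𝒥 𝒥' : RedStruct n}
variable {W : Type} {lt : W → W → Prop} {φ : Term n → W}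
variable {A : Type*} [CommRing A] {F : Term n → MvPolynomial (Fin n) A}

lemma exists_maximal {α : Type*} {r : α → α → Prop} (htrans : Transitive r)
    (hirr : ∀ a, ¬ r a a) :
    ∀ L : List α, L ≠ [] → ∃ m ∈ L, ∀ y ∈ L, ¬ r m y := by
  intro L
  induction L with
  | nil => intro h; exact absurd rfl h
  | cons a L ih =>
    intro _
    rcases eq_or_ne L [] with rfl | hL
    · refine ⟨a, List.mem_cons_self, ?_⟩
      intro y hy
      rcases List.mem_cons.1 hy with rfl | h
      · exact hirr _
      · simp at h
    · obtain ⟨m, hm, hmax⟩ := ih hL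
      by_cases hra : r m a
      · refine ⟨a, List.mem_cons_self, ?_⟩
        intro y hy
        rcases List.mem_cons.1 hy with rfl | h
        · exact hirr _
        · intro hay
          exact hmax y h (htrans hra hay)
      · refine ⟨m, List.mem_cons_of_mem _ hm, ?_⟩
        intro y hy
        rcases List.mem_cons.1 hy with rfl | h
        · exact hra
        · exact hmax y h

lemma sum_map_eq_single {α : Type*} [DecidableEq α] {f : α → A} :
    ∀ {L : List α} {e₀ : α}, e₀ ∈ L → (∀ e ∈ L, e ≠ e₀ → f e = 0) →
      e₀ ∉ L.erase e₀ → (L.map f).sum = f e₀ := by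
  intro L
  induction L with
  | nil => intro e₀ h; simp at h
  | cons a L ih =>
    intro e₀ hmem hz herase
    rcases eq_or_ne a e₀ with rfl | hne
    · have hL0 : ∀ x ∈ L.map f, x = 0 := by
        intro x hx
        obtain ⟨e, heL, rfl⟩ := List.mem_map.1 hx
        refine hz e (List.mem_cons_of_mem _ heL) ?_
        rintro rfl
        rw [List.erase_cons_head] at herase
        exact herase heL
      rw [List.map_cons, List.sum_cons, List.sum_eq_zero hL0, add_zero]
    · have he₀L : e₀ ∈ L := by
        rcases List.mem_cons.1 hmem with h | h
        · exact absurd h.symm hne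
        · exact h
      have herase' : e₀ ∉ L.erase e₀ := by
        rw [List.erase_cons_tail (by simpa using hne)] at herase
        intro hc
        exact herase (List.mem_cons_of_mem _ hc)
      rw [List.map_cons, List.sum_cons,
        ih he₀L (fun e heL => hz e (List.mem_cons_of_mem _ heL)) herase',
        hz a (List.mem_cons_self) hne, zero_add]

lemma coeff_sumList (F : Term n → MvPolynomial (Fin n) A) (v : Term n)
    (L : List ((Term n × Term n) × A)) :
    MvPolynomial.coeff v (sumList F L) =
      (L.map fun e => MvPolynomial.coeff v (MvPolynomial.monomial e.1.2 e.2 * F e.1.1)).sum := by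
  induction L with
  | nil => simp
  | cons e L ih => rw [sumList_cons, MvPolynomial.coeff_add, ih, List.map_cons, List.sum_cons]

/-- The multiset measure of a representation list. -/
noncomputable def lmeasure (φ : Term n → W) (L : List ((Term n × Term n) × A)) : Multiset W :=
  Multiset.map (fun e => φ (e.1.1 + e.1.2)) (↑L : Multiset ((Term n × Term n) × A))

end Claim

end Stmt13Aux
namespace Stmt13Aux

open MvPolynomial

section Claim2

variable {n : ℕ} {𝒥 𝒥' : RedStruct n}
variable {W : Type} {lt : W → W → Prop} {φ : Term n → W}
variable {A : Type*} [CommRing A] {F : Term n → MvPolynomial (Fin n) A}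

attribute [local instance 5000] entryDecEq

lemma lmeasure_perm {L₁ L₂ : List ((Term n × Term n) × A)} (h : L₁.Perm L₂) :
    lmeasure φ L₁ = lmeasure φ L₂ := by
  unfold lmeasure
  rw [Multiset.coe_eq_coe.2 h]

lemma lmeasure_cons (e : (Term n × Term n) × A) (L : List ((Term n × Term n) × A)) :
    lmeasure φ (e :: L) = φ (e.1.1 + e.1.2) ::ₘ lmeasure φ L := by
  unfold lmeasure
  rw [← Multiset.cons_coe, Multiset.map_cons]

lemma lmeasure_append (L₁ L₂ : List ((Term n × Term n) × A)) :
    lmeasure φ (L₁ ++ L₂) = lmeasure φ L₁ + lmeasure φ L₂ := by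
  unfold lmeasure
  rw [← Multiset.coe_add, Multiset.map_add]

lemma lmeasure_map_snd (σ : A → A) (L : List ((Term n × Term n) × A)) :
    lmeasure φ (L.map fun e => (e.1, σ e.2)) = lmeasure φ L := by
  unfold lmeasure
  rw [Multiset.map_coe, Multiset.map_coe, List.map_map]
  rfl

lemma sum_map_eq_single' {α : Type*} {f : α → A} {L L' : List α} {e₀ : α}
    (hp : L.Perm (e₀ :: L')) (hz' : ∀ e ∈ L', f e = 0) : (L.map f).sum = f e₀ := by
  rw [(hp.map f).sum_eq, List.map_cons, List.sum_cons, List.sum_eq_zero, add_zero]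
  intro x hx
  obtain ⟨e, he, rfl⟩ := List.mem_map.1 hx
  exact hz' e he

/-- The heart of the argument: a reduced polynomial admitting a representation with
multipliers in the multiplicative sets of the ordered substructure is zero. -/
lemma claim_core (hsub : RedStruct.IsSubstructure 𝒥' 𝒥)
    (hstrict : IsStrictOrder W lt) (hwf : WellFounded lt)
    (hcompat : ∀ α ∈ 𝒥'.M, ∀ γ ∈ 𝒥'.lam α, ∀ η ∈ 𝒥'.tau α, lt (φ (γ + η)) (φ (α + η)))
    (hF : IsMarkedSet 𝒥 F) (hone : (1 : A) ≠ 0)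
    (hall : ∀ η α : Term n, α ∈ 𝒥.M → ∀ l, IsReducedPoly 𝒥 l →
      RedStar 𝒥 F (MvPolynomial.monomial η (1 : A) * F α) l → l = 0) :
    ∀ L : List ((Term n × Term n) × A),
      (∀ e ∈ L, e.1.1 ∈ 𝒥.M ∧ e.1.2 ∈ 𝒥'.tau e.1.1) →
      IsReducedPoly 𝒥 (sumList F L) → sumList F L = 0 := by
  have htrans : Transitive lt := fun _ _ _ h1 h2 => hstrict.2.trans _ _ _ h1 h2
  have hirr : ∀ w : W, ¬ lt w w := fun w => hstrict.1.irrefl w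
  have hwfL : WellFounded (fun L₁ L₂ : List ((Term n × Term n) × A) =>
      DMStep lt (lmeasure φ L₁) (lmeasure φ L₂)) :=
    InvImage.wf _ (dmStep_wf hwf)
  intro L
  induction L using hwfL.induction with
  | _ L ih =>
  intro hL hred
  rcases eq_or_ne L [] with rfl | hLne
  · simp
  -- Case: some coefficient is zero
  by_cases hz : ∃ e ∈ L, e.2 = 0
  · obtain ⟨e, heL, he0⟩ := hz
    obtain ⟨L', hp⟩ : ∃ L', L.Perm (e :: L') := ⟨_, List.perm_cons_erase heL⟩
    have hsum : sumList F L = sumList F L' := by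
      rw [sumList_perm F hp, sumList_cons, he0]
      simp
    have hdm : DMStep lt (lmeasure φ L') (lmeasure φ L) :=
      ⟨lmeasure φ L', 0, φ (e.1.1 + e.1.2),
        by rw [lmeasure_perm hp, lmeasure_cons], by simp, by simp⟩
    rw [hsum]
    exact ih _ hdm
      (fun e' he' => hL e' (hp.symm.subset (List.mem_cons_of_mem _ he')))
      (hsum ▸ hred)
  push_neg at hz
  -- Case: duplicated pairs
  by_cases hdup : ∃ e₁ ∈ L, ∃ L', L.Perm (e₁ :: L') ∧ ∃ e₂ ∈ L', e₁.1 = e₂.1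
  · obtain ⟨e₁, he₁, L', hp₁, e₂, he₂, hpair⟩ := hdup
    obtain ⟨L₂, hp₂⟩ : ∃ L₂, L'.Perm (e₂ :: L₂) := ⟨_, List.perm_cons_erase he₂⟩
    have hp : L.Perm (e₁ :: e₂ :: L₂) := hp₁.trans (hp₂.cons e₁)
    have hsum : sumList F L = sumList F ((e₁.1, e₁.2 + e₂.2) :: L₂) := by
      rw [sumList_perm F hp, sumList_cons, sumList_cons, sumList_cons, ← add_assoc]
      congr 1
      have h2 : (MvPolynomial.monomial e₂.1.2) e₂.2 * F e₂.1.1 =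
          (MvPolynomial.monomial e₁.1.2) e₂.2 * F e₁.1.1 := by rw [← hpair]
      rw [h2, ← add_mul, ← map_add]
    have hdm : DMStep lt (lmeasure φ ((e₁.1, e₁.2 + e₂.2) :: L₂)) (lmeasure φ L) := by
      refine ⟨φ (e₁.1.1 + e₁.1.2) ::ₘ lmeasure φ L₂, 0, φ (e₂.1.1 + e₂.1.2), ?_, ?_, by simp⟩
      · rw [lmeasure_perm hp, lmeasure_cons, lmeasure_cons, Multiset.cons_swap]
      · rw [lmeasure_cons, add_zero]
    refine hsum.trans (ih _ hdm ?_ (hsum ▸ hred))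
    intro e he
    rcases List.mem_cons.1 he with rfl | heL₂
    · exact hL e₁ he₁
    · exact hL e (hp.symm.subset (List.mem_cons_of_mem _ (List.mem_cons_of_mem _ heL₂)))
  push_neg at hdup
  -- Main case: all coefficients nonzero, all pairs distinct
  obtain ⟨e₀, he₀, hmax⟩ := exists_maximal (r := fun e e' :
      (Term n × Term n) × A => lt (φ (e.1.1 + e.1.2)) (φ (e'.1.1 + e'.1.2)))
    (fun _ _ _ h1 h2 => htrans h1 h2) (fun e => hirr _) L hLne
  set t := e₀.1.1 + e₀.1.2 with htdef
  obtain ⟨R₀, hp₀⟩ : ∃ R₀, L.Perm (e₀ :: R₀) := ⟨_, List.perm_cons_erase he₀⟩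
  have he₀nR₀ : e₀ ∉ R₀ := fun hc => hdup e₀ he₀ R₀ hp₀ e₀ hc rfl
  have hβ₀M : e₀.1.1 ∈ 𝒥.M := (hL e₀ he₀).1
  have hδ₀ : e₀.1.2 ∈ 𝒥'.tau e₀.1.1 := (hL e₀ he₀).2
  have htJ : t ∈ 𝒥.idealJ := ⟨e₀.1.1, hβ₀M, e₀.1.2, rfl⟩
  have htns : t ∉ (sumList F L).support := fun hc => hred t hc htJ
  have hsum0 : (L.map fun e =>
      MvPolynomial.coeff t (MvPolynomial.monomial e.1.2 e.2 * F e.1.1)).sum = 0 := by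
    rw [← coeff_sumList]
    exact MvPolynomial.notMem_support_iff.1 htns
  have hentry : ∀ e ∈ L, MvPolynomial.coeff t (MvPolynomial.monomial e.1.2 e.2 * F e.1.1) =
      if e.1.1 + e.1.2 = t then e.2 else 0 := by
    intro e he
    rw [MvPolynomial.coeff_monomial_mul']
    by_cases hh : e.1.1 + e.1.2 = t
    · rw [if_pos hh, if_pos (by rw [← hh]; exact le_add_self),
        ← hh, add_tsub_cancel_right, (hF _ (hL e he).1).1, mul_one]
    · rw [if_neg hh]
      by_cases hle : e.1.2 ≤ t
      · rw [if_pos hle]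
        have hc0 : MvPolynomial.coeff (t - e.1.2) (F e.1.1) = 0 := by
          by_contra hc
          rcases (hF _ (hL e he).1).2 _ hc with h1 | h2
          · exact hh (by rw [← tsub_add_cancel_of_le hle, h1, add_comm])
          · refine hmax e he ?_
            have hteq : t = (t - e.1.2) + e.1.2 := (tsub_add_cancel_of_le hle).symm
            conv_lhs => rw [hteq]
            exact hcompat e.1.1 (hsub.1 ▸ (hL e he).1) _ (hsub.2.1 ▸ h2) e.1.2 (hL e he).2
        rw [hc0, mul_zero]
      · rw [if_neg hle]
  have hmapeq : (L.map fun e =>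
      MvPolynomial.coeff t (MvPolynomial.monomial e.1.2 e.2 * F e.1.1)) =
      L.map (fun e => if e.1.1 + e.1.2 = t then e.2 else 0) := List.map_congr_left hentry
  rw [hmapeq] at hsum0
  by_cases hsingle : ∀ e ∈ L, e.1.1 + e.1.2 = t → e = e₀
  · exfalso
    have hz' : ∀ e ∈ R₀, (if e.1.1 + e.1.2 = t then e.2 else 0) = 0 := by
      intro e he
      by_cases hh : e.1.1 + e.1.2 = t
      · exact absurd (hsingle e (hp₀.symm.subset (List.mem_cons_of_mem _ he)) hh)
          (by rintro rfl; exact he₀nR₀ he)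
      · rw [if_neg hh]
    have := sum_map_eq_single' (f := fun e : (Term n × Term n) × A =>
        if e.1.1 + e.1.2 = t then e.2 else 0) hp₀ hz'
    rw [hsum0] at this
    exact hz e₀ he₀ (by simpa [htdef] using this.symm)
  push_neg at hsingle
  obtain ⟨e₁, he₁, ht₁, hne₁₀⟩ := hsingle
  have he₁R₀ : e₁ ∈ R₀ := by
    rcases List.mem_cons.1 (hp₀.subset he₁) with h | h
    · exact absurd h hne₁₀
    · exact h
  obtain ⟨L₂, hp₂⟩ : ∃ L₂, R₀.Perm (e₁ :: L₂) := ⟨_, List.perm_cons_erase he₁R₀⟩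
  have hp : L.Perm (e₀ :: e₁ :: L₂) := hp₀.trans (hp₂.cons e₀)
  have hβ₁M : e₁.1.1 ∈ 𝒥.M := (hL e₁ he₁).1
  have hδ₁ : e₁.1.2 ∈ 𝒥'.tau e₁.1.1 := (hL e₁ he₁).2
  -- the side terms of the two marked polynomials lie strictly below `t`
  have hside : ∀ β δ : Term n, β ∈ 𝒥.M → δ ∈ 𝒥'.tau β → β + δ = t →
      ∀ v, v ≠ t → MvPolynomial.coeff v (MvPolynomial.monomial δ (1 : A) * F β) ≠ 0 →
        lt (φ v) (φ t) := by
    intro β δ hβ hδ hβδ v hvt hcv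
    rw [MvPolynomial.coeff_monomial_mul'] at hcv
    by_cases hle : δ ≤ v
    · rw [if_pos hle, one_mul] at hcv
      rcases (hF _ hβ).2 _ hcv with h1 | h2
      · refine absurd ?_ hvt
        conv_lhs => rw [← tsub_add_cancel_of_le hle]
        rw [h1, hβδ]
      · have hveq : v = (v - δ) + δ := (tsub_add_cancel_of_le hle).symm
        rw [hveq, ← hβδ]
        exact hcompat β (hsub.1 ▸ hβ) _ (hsub.2.1 ▸ h2) δ hδ
    · rw [if_neg hle] at hcv
      exact absurd rfl hcv
  -- the overlap rewriting
  set g₀ := MvPolynomial.monomial e₀.1.2 (1 : A) * F e₀.1.1 with hg₀def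
  set g₁ := MvPolynomial.monomial e₁.1.2 (1 : A) * F e₁.1.1 with hg₁def
  set D := g₀ - g₁ with hDdef
  have hcoefftg₀ : MvPolynomial.coeff (e₁.1.1 + e₁.1.2) g₀ = 1 := by
    rw [ht₁, htdef, hg₀def, MvPolynomial.coeff_monomial_mul',
      if_pos le_add_self, add_tsub_cancel_right, (hF _ hβ₀M).1, mul_one]
  have hcoefftg₁ : MvPolynomial.coeff (e₁.1.1 + e₁.1.2) g₁ = 1 := by
    rw [hg₁def, MvPolynomial.coeff_monomial_mul',
      if_pos le_add_self, add_tsub_cancel_right, (hF _ hβ₁M).1, mul_one]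
  have hstepD : Red 𝒥 F g₀ D :=
    ⟨e₁.1.1, hβ₁M, e₁.1.2, hsub.2.2 _ hβ₁M hδ₁, by rw [hcoefftg₀]; exact hone,
      by rw [hcoefftg₀, hDdef, hg₁def]⟩
  have hDsupp : ∀ v ∈ D.support, v ∈ {v : Term n | lt (φ v) (φ t)} := by
    intro v hv
    have hcv := MvPolynomial.mem_support_iff.1 hv
    have hvt : v ≠ t := by
      rintro rfl
      apply hcv
      rw [hDdef, MvPolynomial.coeff_sub, show t = e₁.1.1 + e₁.1.2 from ht₁.symm,
        hcoefftg₀, hcoefftg₁, sub_self]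
    rw [hDdef, MvPolynomial.coeff_sub] at hcv
    by_cases hv₀ : MvPolynomial.coeff v g₀ ≠ 0
    · exact hside _ _ hβ₀M hδ₀ rfl v hvt hv₀
    · push_neg at hv₀
      rw [hv₀, zero_sub, neg_ne_zero] at hcv
      exact hside _ _ hβ₁M hδ₁ ht₁ v hvt hcv
  -- reduce `D` to a normal form, which must be `0`
  obtain ⟨lD, hchainD, hlDred⟩ := exists_nf hsub hwf hcompat hF (𝒥 := 𝒥) (𝒥' := 𝒥') D
  have hlD0 : lD = 0 := hall e₀.1.2 e₀.1.1 hβ₀M lD hlDred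
    (Relation.ReflTransGen.head hstepD (redstar_mono hsub hchainD))
  have hSclo : ∀ β ∈ 𝒥'.M, ∀ δ ∈ 𝒥'.tau β, (β + δ) ∈ {v : Term n | lt (φ v) (φ t)} →
      ∀ γ ∈ 𝒥.lam β, (γ + δ) ∈ {v : Term n | lt (φ v) (φ t)} := by
    intro β hβ δ hδ hmem γ hγ
    exact htrans (hcompat β hβ γ (hsub.2.1 ▸ hγ) δ hδ) hmem
  obtain ⟨-, LD, hLD, hDrep⟩ := unwind hsub hcompat hF (S := {v : Term n | lt (φ v) (φ t)})
    hSclo hchainD hDsupp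
  rw [hlD0, add_zero] at hDrep
  -- the new representation
  set LD' := LD.map (fun e => (e.1, e₀.2 * e.2)) with hLD'def
  set L' := ((e₁.1, e₁.2 + e₀.2) :: L₂) ++ LD' with hL'def
  have hsum : sumList F L = sumList F L' := by
    rw [hL'def, sumList_append, sumList_cons, hLD'def, sumList_smul, ← hDrep,
      sumList_perm F hp, sumList_cons, sumList_cons]
    show (MvPolynomial.monomial e₀.1.2) e₀.2 * F e₀.1.1 +
        ((MvPolynomial.monomial e₁.1.2) e₁.2 * F e₁.1.1 + sumList F L₂) = _
    have h1 : (MvPolynomial.monomial e₀.1.2) e₀.2 * F e₀.1.1 = MvPolynomial.C e₀.2 * g₀ := by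
      rw [hg₀def, ← mul_assoc, MvPolynomial.C_mul_monomial, mul_one]
    have h2 : MvPolynomial.C e₀.2 * g₁ = (MvPolynomial.monomial e₁.1.2) e₀.2 * F e₁.1.1 := by
      rw [hg₁def, ← mul_assoc, MvPolynomial.C_mul_monomial, mul_one]
    have h3 : g₀ = D + g₁ := by rw [hDdef]; ring
    rw [h1, h3, mul_add, h2, map_add]
    ring
  have hL' : ∀ e ∈ L', e.1.1 ∈ 𝒥.M ∧ e.1.2 ∈ 𝒥'.tau e.1.1 := by
    intro e he
    rcases List.mem_append.1 he with h | h
    · rcases List.mem_cons.1 h with rfl | h2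
      · exact ⟨hβ₁M, hδ₁⟩
      · exact hL e (hp.symm.subset (List.mem_cons_of_mem _ (List.mem_cons_of_mem _ h2)))
    · obtain ⟨e', he', rfl⟩ := List.mem_map.1 h
      exact ⟨(hLD e' he').1, (hLD e' he').2.1⟩
  have hdm : DMStep lt (lmeasure φ L') (lmeasure φ L) := by
    refine ⟨φ (e₁.1.1 + e₁.1.2) ::ₘ lmeasure φ L₂, lmeasure φ LD', φ t, ?_, ?_, ?_⟩
    · rw [lmeasure_perm hp, lmeasure_cons, lmeasure_cons]
    · rw [hL'def, lmeasure_append, lmeasure_cons]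
    · intro y hy
      rw [hLD'def, lmeasure_map_snd] at hy
      obtain ⟨e', he', rfl⟩ := Multiset.mem_map.1 hy
      exact (hLD e' (by exact_mod_cast he')).2.2
  rw [hsum]
  exact ih _ hdm hL' (hsum ▸ hred)

end Claim2

end Stmt13Aux
namespace Stmt13Aux

open MvPolynomial

section Universal

variable {n : ℕ}

/-- Index type for the universal coefficient ring. -/
abbrev IdxType (𝒥 : RedStruct n) : Type :=
  Σ α : {α : Term n // α ∈ 𝒥.M}, {γ : Term n // γ ∈ 𝒥.lam α.1}

noncomputable instance (𝒥 : RedStruct n) : Fintype (IdxType 𝒥) := by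
  classical
  unfold IdxType
  infer_instance

/-- The universal coefficient ring. -/
abbrev URing (𝒥 : RedStruct n) : Type := MvPolynomial (IdxType 𝒥) ℤ

instance (𝒥 : RedStruct n) : IsNoetherianRing (URing 𝒥) :=
  MvPolynomial.isNoetherianRing

/-- The universal marked set. -/
noncomputable def UF (𝒥 : RedStruct n) : Term n → MvPolynomial (Fin n) (URing 𝒥) :=
  fun α =>
    if hα : α ∈ 𝒥.M then
      MvPolynomial.monomial α 1 + ∑ γ ∈ (𝒥.lam α).attach,
        (if γ.1 = α then 0 else MvPolynomial.monomial γ.1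
          (MvPolynomial.X (⟨⟨α, hα⟩, ⟨γ.1, γ.2⟩⟩ : IdxType 𝒥)))
    else MvPolynomial.monomial α 1

lemma UF_coeff (𝒥 : RedStruct n) {α : Term n} (hα : α ∈ 𝒥.M) (v : Term n) :
    MvPolynomial.coeff v (UF 𝒥 α) =
      (if v = α then 1 else 0) +
      (if h : v ∈ 𝒥.lam α ∧ v ≠ α then
        MvPolynomial.X (⟨⟨α, hα⟩, ⟨v, h.1⟩⟩ : IdxType 𝒥) else 0) := by
  classical
  rw [UF, dif_pos hα, MvPolynomial.coeff_add, MvPolynomial.coeff_sum]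
  congr 1
  · rw [MvPolynomial.coeff_monomial]
    by_cases h : v = α
    · rw [if_pos h, if_pos h.symm]
    · rw [if_neg h, if_neg (fun hc => h hc.symm)]
  · by_cases h : v ∈ 𝒥.lam α ∧ v ≠ α
    · rw [dif_pos h]
      rw [Finset.sum_eq_single_of_mem (⟨v, h.1⟩ : {x // x ∈ 𝒥.lam α}) (Finset.mem_attach _ _)]
      · rw [if_neg h.2, MvPolynomial.coeff_monomial, if_pos rfl]
      · intro γ _ hγne
        by_cases hγα : γ.1 = α
        · rw [if_pos hγα, MvPolynomial.coeff_zero]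
        · rw [if_neg hγα, MvPolynomial.coeff_monomial,
            if_neg (fun hc => hγne (Subtype.ext hc))]
    · rw [dif_neg h]
      refine Finset.sum_eq_zero fun γ _ => ?_
      by_cases hγα : γ.1 = α
      · rw [if_pos hγα, MvPolynomial.coeff_zero]
      · rw [if_neg hγα, MvPolynomial.coeff_monomial]
        refine if_neg fun hc => ?_
        exact h ⟨hc ▸ γ.2, hc ▸ hγα⟩

lemma UF_marked (𝒥 : RedStruct n) : IsMarkedSet 𝒥 (UF 𝒥) := by
  intro α hα
  constructor
  · rw [UF_coeff 𝒥 hα, if_pos rfl, dif_neg (fun hc => hc.2 rfl), add_zero]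
  · intro β hβ
    rw [UF_coeff 𝒥 hα] at hβ
    by_contra hcon
    push_neg at hcon
    rw [if_neg hcon.1, dif_neg (fun hc => hcon.2 hc.1), add_zero] at hβ
    exact hβ rfl

section Spec

variable {𝒥 : RedStruct n} {A : Type*} [CommRing A]

/-- The specialization homomorphism sending each universal coefficient to the
corresponding coefficient of the marked set `F`. -/
noncomputable def specHom (𝒥 : RedStruct n) (F : Term n → MvPolynomial (Fin n) A) :
    URing 𝒥 →+* A :=
  MvPolynomial.eval₂Hom (Int.castRingHom A)
    (fun i => MvPolynomial.coeff i.2.1 (F i.1.1))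

lemma spec_UF {F : Term n → MvPolynomial (Fin n) A} (hF : IsMarkedSet 𝒥 F)
    {α : Term n} (hα : α ∈ 𝒥.M) :
    MvPolynomial.map (specHom 𝒥 F) (UF 𝒥 α) = F α := by
  ext v
  rw [MvPolynomial.coeff_map, UF_coeff 𝒥 hα, map_add]
  by_cases h1 : v = α
  · rw [if_pos h1, dif_neg (fun hc => hc.2 h1), map_zero, add_zero, map_one, h1, (hF α hα).1]
  · rw [if_neg h1, map_zero, zero_add]
    by_cases h2 : v ∈ 𝒥.lam α ∧ v ≠ α
    · rw [dif_pos h2]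
      rw [specHom, MvPolynomial.eval₂Hom_X']
    · rw [dif_neg h2, map_zero]
      by_contra hcon
      have := (hF α hα).2 v (fun hc => hcon hc.symm)
      rcases this with h | h
      · exact h1 h
      · exact h2 ⟨h, h1⟩

variable {R : Type*} [CommRing R] {ψ : R →+* A}
variable {G : Term n → MvPolynomial (Fin n) R} {F : Term n → MvPolynomial (Fin n) A}

/-- Specialization of a reduction step. -/
lemma map_red (hGF : ∀ β ∈ 𝒥.M, MvPolynomial.map ψ (G β) = F β)
    {g h : MvPolynomial (Fin n) R} (hr : Red 𝒥 G g h) :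
    RedStar 𝒥 F (MvPolynomial.map ψ g) (MvPolynomial.map ψ h) := by
  obtain ⟨β, hβ, δ, hδ, hc, he⟩ := hr
  have hmap : MvPolynomial.map ψ h = MvPolynomial.map ψ g -
      MvPolynomial.monomial δ (ψ (MvPolynomial.coeff (β + δ) g)) * F β := by
    rw [he, map_sub, map_mul, MvPolynomial.map_monomial, hGF β hβ]
  by_cases h0 : ψ (MvPolynomial.coeff (β + δ) g) = 0
  · rw [hmap, h0]
    rw [MvPolynomial.monomial_zero, zero_mul, sub_zero]
    exact Relation.ReflTransGen.refl
  · refine Relation.ReflTransGen.single ⟨β, hβ, δ, hδ, ?_, ?_⟩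
    · rw [MvPolynomial.coeff_map]
      exact h0
    · rw [hmap, MvPolynomial.coeff_map]

lemma map_redstar (hGF : ∀ β ∈ 𝒥.M, MvPolynomial.map ψ (G β) = F β)
    {g h : MvPolynomial (Fin n) R} (hr : Relation.ReflTransGen (Red 𝒥 G) g h) :
    RedStar 𝒥 F (MvPolynomial.map ψ g) (MvPolynomial.map ψ h) := by
  induction hr with
  | refl => exact Relation.ReflTransGen.refl
  | tail _ hstep ih => exact ih.trans (map_red hGF hstep)

/-- Lifting a reduction chain along the specialization. -/
lemma lift_chain (hGF : ∀ β ∈ 𝒥.M, MvPolynomial.map ψ (G β) = F β)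
    {a l : MvPolynomial (Fin n) A} (hred : RedStar 𝒥 F a l) :
    ∀ gR : MvPolynomial (Fin n) R, a = MvPolynomial.map ψ gR →
      ∃ lR, Relation.ReflTransGen (Red 𝒥 G) gR lR ∧ MvPolynomial.map ψ lR = l := by
  induction hred using Relation.ReflTransGen.head_induction_on with
  | refl => exact fun gR hgR => ⟨gR, Relation.ReflTransGen.refl, hgR.symm⟩
  | head hstep _ ih =>
    rename_i a c _
    intro gR hgR
    obtain ⟨β, hβ, δ, hδ, hc, he⟩ := hstep
    have hcoeff : ψ (MvPolynomial.coeff (β + δ) gR) = MvPolynomial.coeff (β + δ) a := by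
      rw [hgR, MvPolynomial.coeff_map]
    have hcR : MvPolynomial.coeff (β + δ) gR ≠ 0 := by
      intro h0
      rw [h0, map_zero] at hcoeff
      exact hc hcoeff.symm
    set cR := gR - MvPolynomial.monomial δ (MvPolynomial.coeff (β + δ) gR) * G β with hcRdef
    have hmapcR : c = MvPolynomial.map ψ cR := by
      rw [he, hcRdef, map_sub, map_mul, MvPolynomial.map_monomial, hGF β hβ, hcoeff, hgR]
    obtain ⟨lR, hchain, hmap⟩ := ih cR hmapcR
    exact ⟨lR, Relation.ReflTransGen.head ⟨β, hβ, δ, hδ, hcR, rfl⟩ hchain, hmap⟩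

lemma map_const_along_chain {𝒥' : RedStruct n} (hsub : RedStruct.IsSubstructure 𝒥' 𝒥)
    (hGF : ∀ β ∈ 𝒥.M, MvPolynomial.map ψ (G β) = F β)
    {l : MvPolynomial (Fin n) A} (hl : IsReducedPoly 𝒥 l)
    {p q : MvPolynomial (Fin n) R} (hchain : Relation.ReflTransGen (Red 𝒥' G) p q) :
    MvPolynomial.map ψ p = l → MvPolynomial.map ψ q = l := by
  induction hchain with
  | refl => exact id
  | tail _ hstep ih =>
    rename_i b c hbc
    intro hp
    obtain ⟨β, hβ, δ, hδ, hc, he⟩ := hstep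
    have hβM : β ∈ 𝒥.M := hsub.1 ▸ hβ
    have hψc : ψ (MvPolynomial.coeff (β + δ) b) = 0 := by
      have h1 : MvPolynomial.coeff (β + δ) l = 0 := by
        refine MvPolynomial.notMem_support_iff.1 fun hmem => ?_
        exact hl _ hmem ⟨β, hβM, δ, rfl⟩
      rw [← h1, ← ih hp, MvPolynomial.coeff_map]
    rw [he, map_sub, map_mul, MvPolynomial.map_monomial, hψc]
    simp [ih hp]

end Spec

end Universal

end Stmt13Aux
namespace Stmt13Aux

open MvPolynomial

section Final

variable {n : ℕ}

lemma redstar_mem_ideal {𝒥 : RedStruct n} {A : Type*} [CommRing A]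
    {F : Term n → MvPolynomial (Fin n) A} {g h : MvPolynomial (Fin n) A}
    (hr : RedStar 𝒥 F g h) (hg : g ∈ Ideal.span (F '' ↑𝒥.M)) :
    h ∈ Ideal.span (F '' ↑𝒥.M) := by
  induction hr with
  | refl => exact hg
  | tail _ hstep ih =>
    obtain ⟨β, hβ, δ, hδ, hc, he⟩ := hstep
    rw [he]
    exact Submodule.sub_mem _ ih
      (Ideal.mul_mem_left _ _ (Ideal.subset_span ⟨β, by simpa using hβ, rfl⟩))

/-- Forward direction: a marked basis admits only `0` as reduced normal forms of the
`x^η f_α`. -/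
lemma basis_implies {𝒥 : RedStruct n} {A : Type*} [CommRing A]
    {F : Term n → MvPolynomial (Fin n) A}
    (hbasis : IsMarkedBasis 𝒥 F) {η α : Term n} (hα : α ∈ 𝒥.M)
    {l : MvPolynomial (Fin n) A} (hl : IsReducedPoly 𝒥 l)
    (hred : RedStar 𝒥 F (MvPolynomial.monomial η (1 : A) * F α) l) : l = 0 := by
  have hstart : MvPolynomial.monomial η (1 : A) * F α ∈ Ideal.span (F '' ↑𝒥.M) :=
    Ideal.mul_mem_left _ _ (Ideal.subset_span ⟨α, by simpa using hα, rfl⟩)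
  have hlI : l ∈ Ideal.span (F '' ↑𝒥.M) := redstar_mem_ideal hred hstart
  have hlNJ : l ∈ NJSpan 𝒥 A := mem_NJSpan_of_reduced hl
  exact Submodule.disjoint_def.1 hbasis.disjoint l hlI hlNJ

/-- Conversion of an arbitrary representation into one with multipliers in `τ'`. -/
lemma good_rep {𝒥 𝒥' : RedStruct n} (hsub : RedStruct.IsSubstructure 𝒥' 𝒥)
    {W : Type} {lt : W → W → Prop} {φ : Term n → W} (hwf : WellFounded lt)
    (hcompat : ∀ α ∈ 𝒥'.M, ∀ γ ∈ 𝒥'.lam α, ∀ η ∈ 𝒥'.tau α, lt (φ (γ + η)) (φ (α + η)))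
    {A : Type*} [CommRing A] {F : Term n → MvPolynomial (Fin n) A} (hF : IsMarkedSet 𝒥 F)
    (hall : ∀ η α : Term n, α ∈ 𝒥.M → ∀ l, IsReducedPoly 𝒥 l →
      RedStar 𝒥 F (MvPolynomial.monomial η (1 : A) * F α) l → l = 0)
    (L₀ : List ((Term n × Term n) × A)) (hL₀ : ∀ e ∈ L₀, e.1.1 ∈ 𝒥.M) :
    ∃ L₁, (∀ e ∈ L₁, e.1.1 ∈ 𝒥.M ∧ e.1.2 ∈ 𝒥'.tau e.1.1) ∧
      sumList F L₀ = sumList F L₁ := by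
  induction L₀ with
  | nil => exact ⟨[], by simp, by simp⟩
  | cons e L ihL =>
    obtain ⟨L₁', hL₁', heq'⟩ := ihL (fun e' he' => hL₀ e' (List.mem_cons_of_mem _ he'))
    have hβ : e.1.1 ∈ 𝒥.M := hL₀ e (List.mem_cons_self)
    obtain ⟨lE, hchainE, hlEred⟩ := exists_nf hsub hwf hcompat hF (𝒥 := 𝒥) (𝒥' := 𝒥')
      (MvPolynomial.monomial e.1.2 (1 : A) * F e.1.1)
    have hlE0 : lE = 0 := hall e.1.2 e.1.1 hβ lE hlEred (redstar_mono hsub hchainE)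
    obtain ⟨-, LE, hLE, hErep⟩ := unwind hsub hcompat hF (S := (Set.univ : Set (Term n)))
      (by intro _ _ _ _ _ _ _; trivial) hchainE (by intro _ _; trivial)
    rw [hlE0, add_zero] at hErep
    refine ⟨(LE.map fun e' => (e'.1, e.2 * e'.2)) ++ L₁', ?_, ?_⟩
    · intro e' he'
      rcases List.mem_append.1 he' with h | h
      · obtain ⟨e'', he'', rfl⟩ := List.mem_map.1 h
        exact ⟨(hLE e'' he'').1, (hLE e'' he'').2.1⟩
      · exact hL₁' e' h
    · rw [sumList_cons, sumList_append, sumList_smul, ← hErep, ← heq']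
      congr 1
      rw [← mul_assoc, MvPolynomial.C_mul_monomial, mul_one]

/-- Backward direction: if all reduced normal forms of all `x^η f_α` vanish, `F` is a
marked basis. -/
lemma all_implies_basis {𝒥 𝒥' : RedStruct n} (hsub : RedStruct.IsSubstructure 𝒥' 𝒥)
    {W : Type} {lt : W → W → Prop} {φ : Term n → W}
    (hstrict : IsStrictOrder W lt) (hwf : WellFounded lt)
    (hcompat : ∀ α ∈ 𝒥'.M, ∀ γ ∈ 𝒥'.lam α, ∀ η ∈ 𝒥'.tau α, lt (φ (γ + η)) (φ (α + η)))
    {A : Type*} [CommRing A] {F : Term n → MvPolynomial (Fin n) A} (hF : IsMarkedSet 𝒥 F)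
    (hall : ∀ η α : Term n, α ∈ 𝒥.M → ∀ l, IsReducedPoly 𝒥 l →
      RedStar 𝒥 F (MvPolynomial.monomial η (1 : A) * F α) l → l = 0) :
    IsMarkedBasis 𝒥 F := by
  by_cases htriv : (1 : A) = 0
  · have hzero : ∀ g : MvPolynomial (Fin n) A, g = 0 := by
      intro g
      calc g = MvPolynomial.C 1 * g := by rw [map_one, one_mul]
      _ = 0 := by rw [htriv, map_zero, zero_mul]
    constructor
    · rw [Submodule.disjoint_def]
      exact fun x _ _ => hzero x
    · rw [codisjoint_iff, Submodule.eq_top_iff']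
      intro x
      rw [hzero x]
      exact Submodule.zero_mem _
  constructor
  · rw [Submodule.disjoint_def]
    intro x hxI hxNJ
    obtain ⟨L₀, hL₀, heq⟩ := exists_rep_of_mem_ideal (𝒥 := 𝒥) F hxI
    obtain ⟨L₁, hL₁, heq₁⟩ := good_rep hsub hwf hcompat hF hall L₀ hL₀
    rw [heq, heq₁]
    refine claim_core hsub hstrict hwf hcompat hF htriv hall L₁ hL₁ ?_
    rw [← heq₁, ← heq]
    intro v hv
    exact supp_of_mem_NJSpan hxNJ v hv
  · rw [codisjoint_iff, Submodule.eq_top_iff']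
    intro g
    obtain ⟨l, hchain, hlred⟩ := exists_nf hsub hwf hcompat hF (𝒥 := 𝒥) (𝒥' := 𝒥') g
    obtain ⟨-, L, hL, heq⟩ := unwind hsub hcompat hF (S := (Set.univ : Set (Term n)))
      (by intro _ _ _ _ _ _ _; trivial) hchain (by intro _ _; trivial)
    rw [Submodule.mem_sup]
    refine ⟨sumList F L, ?_, l, mem_NJSpan_of_reduced hlred, heq.symm⟩
    show sumList F L ∈ Ideal.span (F '' ↑𝒥.M)
    exact sumList_mem_ideal (fun e he => (hL e he).1) F

/-- The finite set `G` obtained from noetherianity of the universal coefficient ring. -/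
lemma G_exists (𝒥 𝒥' : RedStruct n) (hsub : RedStruct.IsSubstructure 𝒥' 𝒥)
    {W : Type} {lt : W → W → Prop} {φ : Term n → W}
    (hstrict : IsStrictOrder W lt) (hwf : WellFounded lt)
    (hcompat : ∀ α ∈ 𝒥'.M, ∀ γ ∈ 𝒥'.lam α, ∀ η ∈ 𝒥'.tau α, lt (φ (γ + η)) (φ (α + η))) :
    ∃ G : Finset (Term n × Term n), (∀ p ∈ G, p.2 ∈ 𝒥.M) ∧
      ∀ (A : Type) [CommRing A], ∀ F : Term n → MvPolynomial (Fin n) A,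
        IsMarkedSet 𝒥 F →
        (∀ p ∈ G, ∀ l, IsReducedPoly 𝒥 l →
          RedStar 𝒥 F (MvPolynomial.monomial p.1 (1 : A) * F p.2) l → l = 0) →
        ∀ η α : Term n, α ∈ 𝒥.M → ∀ l, IsReducedPoly 𝒥 l →
          RedStar 𝒥 F (MvPolynomial.monomial η (1 : A) * F α) l → l = 0 := by
  classical
  set Sset : Set (URing 𝒥) := {a | ∃ p : Term n × Term n, p.2 ∈ 𝒥.M ∧
    ∃ lu, IsReducedPoly 𝒥 lu ∧
      RedStar 𝒥 (UF 𝒥) (MvPolynomial.monomial p.1 (1 : URing 𝒥) * UF 𝒥 p.2) lu ∧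
      ∃ u, MvPolynomial.coeff u lu = a} with hSdef
  have hfg : (Ideal.span Sset).FG := IsNoetherian.noetherian _
  obtain ⟨T, hT⟩ := hfg
  have hTmem : ∀ x ∈ T, ∃ T' : Finset (URing 𝒥), ↑T' ⊆ Sset ∧
      x ∈ Submodule.span (URing 𝒥) (↑T' : Set (URing 𝒥)) := by
    intro x hx
    have hx' : x ∈ Submodule.span (URing 𝒥) Sset := by
      rw [show (Submodule.span (URing 𝒥) Sset) = Ideal.span Sset from rfl, ← hT]
      exact Submodule.subset_span hx
    exact Submodule.mem_span_finite_of_mem_span hx'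
  choose T'f hT'sub hT'mem using hTmem
  set S₀ : Finset (URing 𝒥) := T.attach.biUnion (fun x => T'f x.1 x.2) with hS₀def
  have hS₀sub : (↑S₀ : Set (URing 𝒥)) ⊆ Sset := by
    intro a ha
    rw [hS₀def] at ha
    simp only [Finset.coe_biUnion, Set.mem_iUnion, Finset.mem_coe] at ha
    obtain ⟨x, -, hx2⟩ := ha
    exact hT'sub _ _ hx2
  have hEle : Ideal.span Sset ≤ Ideal.span (↑S₀ : Set (URing 𝒥)) := by
    rw [← hT, Ideal.span_le]
    intro x hx
    have hxT : x ∈ T := Finset.mem_coe.1 hx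
    have h1 : (↑(T'f x hxT) : Set (URing 𝒥)) ⊆ ↑S₀ := by
      intro a ha
      rw [hS₀def]
      exact Finset.mem_coe.2 (Finset.mem_biUnion.2 ⟨⟨x, hxT⟩, Finset.mem_attach _ _, ha⟩)
    exact Submodule.span_mono h1 (hT'mem x hxT)
  set pc : URing 𝒥 → Term n × Term n := fun a =>
    if h : a ∈ Sset then h.choose else (0, 0) with hpcdef
  have hpc : ∀ a (h : a ∈ Sset), pc a = h.choose := by
    intro a h
    rw [hpcdef]
    exact dif_pos h
  refine ⟨S₀.image pc, ?_, ?_⟩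
  · intro p hp
    obtain ⟨a, ha, rfl⟩ := Finset.mem_image.1 hp
    have haS : a ∈ Sset := hS₀sub (Finset.mem_coe.2 ha)
    rw [hpc a haS]
    exact haS.choose_spec.1
  · intro A _ F hF hG η α hα l hl hred
    set ψ := specHom 𝒥 F with hψdef
    have hGF : ∀ β ∈ 𝒥.M, MvPolynomial.map ψ (UF 𝒥 β) = F β := fun β hβ => spec_UF hF hβ
    have hψS₀ : ∀ a ∈ S₀, ψ a = 0 := by
      intro a ha
      have haS : a ∈ Sset := hS₀sub (Finset.mem_coe.2 ha)
      have hp : pc a ∈ S₀.image pc := Finset.mem_image_of_mem pc ha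
      obtain ⟨hpM, lu, hlured, hchainU, u, hua⟩ := haS.choose_spec
      have hmap0 : MvPolynomial.map ψ lu = 0 := by
        refine hG (pc a) hp (MvPolynomial.map ψ lu) ?_ ?_
        · intro v hv hvJ
          exact hlured v (MvPolynomial.support_map_subset _ _ hv) hvJ
        · have hmr := map_redstar hGF hchainU
          rw [map_mul, MvPolynomial.map_monomial, RingHom.map_one, hGF _ hpM] at hmr
          rw [hpc a haS]
          exact hmr
      have h2 : ψ a = MvPolynomial.coeff u (MvPolynomial.map ψ lu) := by
        rw [MvPolynomial.coeff_map, hua]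
      rw [h2, hmap0, MvPolynomial.coeff_zero]
    have hψE : ∀ a ∈ Ideal.span Sset, ψ a = 0 := by
      intro a ha
      have ha' := hEle ha
      refine Submodule.span_induction ?_ ?_ ?_ ?_ ha'
      · intro x hx
        exact hψS₀ x (Finset.mem_coe.1 hx)
      · exact map_zero ψ
      · intro x y _ _ hx hy
        rw [map_add, hx, hy, add_zero]
      · intro r x _ hx
        rw [smul_eq_mul, map_mul, hx, mul_zero]
    have hstart : MvPolynomial.monomial η (1 : A) * F α =
        MvPolynomial.map ψ (MvPolynomial.monomial η (1 : URing 𝒥) * UF 𝒥 α) := by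
      rw [map_mul, MvPolynomial.map_monomial, RingHom.map_one, hGF _ hα]
    obtain ⟨lu₁, hchain₁, hmap₁⟩ := lift_chain hGF hred _ hstart
    obtain ⟨lu₂, hchain₂, hlu₂red⟩ := exists_nf hsub hwf hcompat (UF_marked 𝒥)
      (𝒥 := 𝒥) (𝒥' := 𝒥') lu₁
    have hmap₂ : MvPolynomial.map ψ lu₂ = l := map_const_along_chain hsub hGF hl hchain₂ hmap₁
    have hchainU : RedStar 𝒥 (UF 𝒥) (MvPolynomial.monomial η (1 : URing 𝒥) * UF 𝒥 α) lu₂ :=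
      hchain₁.trans (redstar_mono hsub hchain₂)
    have hcoeffS : ∀ u, MvPolynomial.coeff u lu₂ ∈ Sset :=
      fun u => ⟨(η, α), hα, lu₂, hlu₂red, hchainU, u, rfl⟩
    rw [← hmap₂]
    ext v
    rw [MvPolynomial.coeff_map, MvPolynomial.coeff_zero]
    exact hψE _ (Ideal.subset_span (hcoeffS v))

end Final

end Stmt13Aux
/-- if `𝒥` has an ordered substructure, then there is a finite set
`G ⊆ 𝒯 × M` such that, for every commutative ring `A` and every marked set `F` on `𝒥`
over `A`, `F` is a marked basis iff for all `(x^η, x^α) ∈ G` all complete reductions of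
`x^η f_α` end in `0`. -/
theorem stmt13 {n : ℕ} (𝒥 : RedStruct n)
    (h : ∃ 𝒥' : RedStruct n, RedStruct.IsSubstructure 𝒥' 𝒥 ∧ 𝒥'.IsOrdered) :
    ∃ G : Finset (Term n × Term n), (∀ p ∈ G, p.2 ∈ 𝒥.M) ∧
      ∀ (A : Type) [CommRing A], ∀ F : Term n → MvPolynomial (Fin n) A,
        IsMarkedSet 𝒥 F →
          (IsMarkedBasis 𝒥 F ↔
            ∀ p ∈ G, ∀ l : MvPolynomial (Fin n) A, IsReducedPoly 𝒥 l →
              RedStar 𝒥 F (MvPolynomial.monomial p.1 (1 : A) * F p.2) l → l = 0) := by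
  obtain ⟨𝒥', hsub, W, lt, φ, hstrict, hwf, hcompat⟩ := h
  obtain ⟨G, hGM, hGimp⟩ := Stmt13Aux.G_exists 𝒥 𝒥' hsub hstrict hwf hcompat
  refine ⟨G, hGM, ?_⟩
  intro A _ F hF
  constructor
  · intro hbasis p hp l hl hred
    exact Stmt13Aux.basis_implies hbasis (hGM p hp) hl hred
  · intro hG
    exact Stmt13Aux.all_implies_basis hsub hstrict hwf hcompat hF (hGimp A F hF hG)
end

section
/- (Möller's syzygy relation) Let t_i, t_j, t_k be terms (monomials) in A[x_1,…,x_n] and let f_i, f_j, f_k ∈ A[x_1,…,x_n]. Writing T(a,b) := lcm(t_a, t_b), T(i,j,k) := lcm(t_i, t_j, t_k), and S(a,b) := (T(a,b)/t_b)·f_b − (T(a,b)/t_a)·f_a, one has the identity (T(i,j,k)/T(i,k))·S(i,k) − (T(i,j,k)/T(i,j))·S(i,j) + (T(i,j,k)/T(k,j))·S(k,j) = 0. -/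
open MvPolynomial

variable {n : ℕ}

lemma term_sub_add {n : ℕ} {T s t : Term n} (h1 : t ≤ s) (h2 : s ≤ T) :
    (T - s) + (s - t) = T - t := by
  ext x
  have := h1 x
  have := h2 x
  simp only [Finsupp.add_apply, Finsupp.tsub_apply]
  omega

/-- Möller's syzygy relation:
`(T(i,j,k)/T(i,k))·S(i,k) − (T(i,j,k)/T(i,j))·S(i,j) + (T(i,j,k)/T(k,j))·S(k,j) = 0`,
where `T(a,b) = lcm(t_a,t_b)` (exponentwise sup), quotients of terms are exponentwise
differences, and `S(a,b) = (T(a,b)/t_b)·f_b − (T(a,b)/t_a)·f_a`. -/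
theorem stmt14 {n : ℕ} {A : Type} [CommRing A] (ti tj tk : Term n)
    (fi fj fk : MvPolynomial (Fin n) A) :
    MvPolynomial.monomial ((ti ⊔ tj ⊔ tk) - (ti ⊔ tk)) (1 : A) *
        (MvPolynomial.monomial ((ti ⊔ tk) - tk) (1 : A) * fk -
          MvPolynomial.monomial ((ti ⊔ tk) - ti) (1 : A) * fi) -
      MvPolynomial.monomial ((ti ⊔ tj ⊔ tk) - (ti ⊔ tj)) (1 : A) *
        (MvPolynomial.monomial ((ti ⊔ tj) - tj) (1 : A) * fj -
          MvPolynomial.monomial ((ti ⊔ tj) - ti) (1 : A) * fi) +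
      MvPolynomial.monomial ((ti ⊔ tj ⊔ tk) - (tk ⊔ tj)) (1 : A) *
        (MvPolynomial.monomial ((tk ⊔ tj) - tj) (1 : A) * fj -
          MvPolynomial.monomial ((tk ⊔ tj) - tk) (1 : A) * fk) = 0 := by
  have key : ∀ (T s t : Term n), t ≤ s → s ≤ T →
      (MvPolynomial.monomial (T - s) (1 : A)) * (MvPolynomial.monomial (s - t) (1 : A)) =
        MvPolynomial.monomial (T - t) (1 : A) := by
    intro T s t h1 h2
    rw [MvPolynomial.monomial_mul, term_sub_add h1 h2, one_mul]
  have hT : ti ⊔ tj ⊔ tk = ti ⊔ tk ⊔ tj := by rw [sup_right_comm]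
  have hT2 : ti ⊔ tj ⊔ tk = tk ⊔ tj ⊔ ti := by
    ext x
    simp only [Finsupp.sup_apply]
    omega
  simp only [mul_sub, ← mul_assoc]
  rw [key _ _ _ (le_sup_right) (by rw [hT]; exact le_sup_left),
    key _ _ _ (le_sup_left) (by rw [hT]; exact le_sup_left),
    key _ _ _ (le_sup_right) (le_sup_left),
    key _ _ _ (le_sup_left) (le_sup_left),
    key _ _ _ (le_sup_right) (by rw [hT2]; exact le_sup_left),
    key _ _ _ (le_sup_left) (by rw [hT2]; exact le_sup_left)]
  ring
end

section
/- Let 𝒥 be a noetherian reduction structure with disjoint cones whose ordering function φ is stable, and let F be a marked set over 𝒥. Then the following are equivalent: (a) F is a marked basis; (b) for all x^α, x^{α'} ∈ M with lcm(x^α, x^{α'}) ∈ cone(x^{α'}), every reduced l with S(f_{α'}, f_α) →_* l equals 0; (c) for all x^α, x^{α'} ∈ M and x^γ with x^{γ+α} = lcm(x^α, x^{α'}) ∈ cone(x^{α'}), every reduced l with x^γ f_α →_* l equals 0. -/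
open MvPolynomial

variable {n : ℕ}

/-- The ordering function `φ` is stable: `φ(x^δ) ≻ φ(x^{δ'})` implies
`φ(x^{δ+ε}) ≻ φ(x^{δ'+ε}) ⪰ φ(x^ε)`. -/
def StableOrderingFn {n : ℕ} {W : Type} (lt : W → W → Prop) (φ : Term n → W) : Prop :=
  ∀ δ δ' ε : Term n, lt (φ δ') (φ δ) →
    lt (φ (δ' + ε)) (φ (δ + ε)) ∧ (lt (φ ε) (φ (δ' + ε)) ∨ φ (δ' + ε) = φ ε)

namespace Stmt15Aux

open MvPolynomial Relation

variable {n : ℕ} {A : Type} [CommRing A]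

/-- A finite set has a maximal element w.r.t. a strict order, through a map `f`. -/
lemma exists_maximal_image {X : Type*} {W : Type} (lt : W → W → Prop)
    (hso : IsStrictOrder W lt) (f : X → W) (s : Finset X) :
    s.Nonempty → ∃ a ∈ s, ∀ b ∈ s, ¬ lt (f a) (f b) := by
  classical
  haveI := hso
  induction s using Finset.induction_on with
  | empty => rintro ⟨x, hx⟩; simp at hx
  | @insert x t hx ih =>
    intro _
    rcases t.eq_empty_or_nonempty with rfl | ht
    · exact ⟨x, by simp, by simpa using irrefl_of lt (f x)⟩
    · obtain ⟨a, ha, hmax⟩ := ih ht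
      by_cases hxa : lt (f a) (f x)
      · refine ⟨x, Finset.mem_insert_self _ _, ?_⟩
        intro b hb hlt
        rcases Finset.mem_insert.mp hb with rfl | hb
        · exact irrefl_of lt (f b) hlt
        · exact hmax b hb (IsTrans.trans _ _ _ hxa hlt)
      · refine ⟨a, Finset.mem_insert_of_mem ha, ?_⟩
        intro b hb
        rcases Finset.mem_insert.mp hb with rfl | hb
        · exact hxa
        · exact hmax b hb

/-- Transitive closure of CutExpand: replace one element by strictly smaller ones and
drop some further elements. -/
lemma transGen_cutExpand {W : Type} {lt : W → W → Prop} (X Z : Multiset W) (y₀ : W)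
    (hZ : ∀ z ∈ Z, lt z y₀) (Y' : Multiset W) :
    Relation.TransGen (Relation.CutExpand lt) (X + Z) (X + ({y₀} + Y')) := by
  classical
  induction Y' using Multiset.induction_on with
  | empty =>
    refine TransGen.single ?_
    have h1 : Relation.CutExpand lt Z {y₀} := Relation.cutExpand_singleton hZ
    simpa using (Relation.cutExpand_add_left X).mpr h1
  | @cons y Y' ih =>
    refine TransGen.tail ih ?_
    refine ⟨0, y, by simp, ?_⟩
    rw [add_zero, Multiset.ext]
    intro b
    simp [Multiset.count_add, Multiset.count_cons, Multiset.count_singleton]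
    by_cases hby : b = y <;> simp [hby] <;> ring

section Red

variable (𝒥 : RedStruct n) (F : Term n → MvPolynomial (Fin n) A)

/-- Condition (b): all relevant S-polynomials reduce only to `0`. -/
def CondB : Prop :=
  ∀ α ∈ 𝒥.M, ∀ α' ∈ 𝒥.M, (α ⊔ α') ∈ 𝒥.cone α' →
    ∀ l : MvPolynomial (Fin n) A, IsReducedPoly 𝒥 l → RedStar 𝒥 F (SPoly F α α') l → l = 0

/-- `τF` generators whose head satisfies the bound `B`. -/
noncomputable def tauSpanB (B : Term n → Prop) : Submodule A (MvPolynomial (Fin n) A) :=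
  Submodule.span A
    {p | ∃ a ∈ 𝒥.M, ∃ η ∈ 𝒥.tau a, B (a + η) ∧ p = monomial η (1 : A) * F a}

variable {𝒥 F}

lemma tauSpanB_le_tauSpan (B : Term n → Prop) :
    tauSpanB 𝒥 F B ≤ tauSpan 𝒥 𝒥.tau F := by
  apply Submodule.span_mono
  rintro p ⟨a, ha, η, hη, _, rfl⟩
  exact ⟨a, ha, η, hη, rfl⟩

lemma coeff_mono_mul_ne_zero {η t : Term n} {c : A} {p : MvPolynomial (Fin n) A}
    (h : MvPolynomial.coeff t (monomial η c * p) ≠ 0) :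
    η ≤ t ∧ MvPolynomial.coeff (t - η) p ≠ 0 := by
  rw [coeff_monomial_mul'] at h
  by_cases hle : η ≤ t
  · refine ⟨hle, ?_⟩
    intro h0
    rw [if_pos hle, h0, mul_zero] at h
    exact h rfl
  · rw [if_neg hle] at h; exact absurd rfl h

lemma supp_mono_mul_marked (hF : IsMarkedSet 𝒥 F) {a : Term n} (ha : a ∈ 𝒥.M)
    {η t : Term n} {c : A} (h : MvPolynomial.coeff t (monomial η c * F a) ≠ 0) :
    t = a + η ∨ ∃ γ ∈ 𝒥.lam a, t = γ + η := by
  obtain ⟨hle, hco⟩ := coeff_mono_mul_ne_zero h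
  have ht : t = (t - η) + η := (tsub_add_cancel_of_le hle).symm
  rcases (hF a ha).2 _ hco with h1 | h1
  · left; rw [ht, h1]
  · right; exact ⟨t - η, h1, ht⟩

lemma coeff_head (hF : IsMarkedSet 𝒥 F) {a : Term n} (ha : a ∈ 𝒥.M) (η : Term n) (c : A) :
    MvPolynomial.coeff (a + η) (monomial η c * F a) = c := by
  rw [coeff_monomial_mul', if_pos (le_add_self : η ≤ a + η), add_tsub_cancel_right,
    (hF a ha).1, mul_one]

lemma gen_mem_tauSpanB {B : Term n → Prop} {a η : Term n} (ha : a ∈ 𝒥.M)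
    (hη : η ∈ 𝒥.tau a) (hB : B (a + η)) (c : A) :
    monomial η c * F a ∈ tauSpanB 𝒥 F B := by
  have : monomial η c * F a = c • (monomial η (1 : A) * F a) := by
    rw [← smul_mul_assoc, MvPolynomial.smul_monomial, smul_eq_mul, mul_one]
  rw [this]
  exact Submodule.smul_mem _ _ (Submodule.subset_span ⟨a, ha, η, hη, hB, rfl⟩)

/-- Bounded bookkeeping along a reduction sequence. -/
lemma redstar_bounded (hF : IsMarkedSet 𝒥 F) (B : Term n → Prop)
    (hB : ∀ a ∈ 𝒥.M, ∀ η ∈ 𝒥.tau a, ∀ γ ∈ 𝒥.lam a, B (a + η) → B (γ + η))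
    {g h : MvPolynomial (Fin n) A} (hred : RedStar 𝒥 F g h) :
    (∀ t ∈ g.support, B t) → (∀ t ∈ h.support, B t) ∧ g - h ∈ tauSpanB 𝒥 F B := by
  induction hred using Relation.ReflTransGen.head_induction_on with
  | refl => intro hg; exact ⟨hg, by simp⟩
  | @head g₀ g₁ hstep hrest ih =>
    intro hg
    obtain ⟨a, ha, η, hη, hc, hg1⟩ := hstep
    have hBh : B (a + η) := hg _ (MvPolynomial.mem_support_iff.mpr hc)
    have hg1supp : ∀ t ∈ g₁.support, B t := by
      intro t ht
      rw [MvPolynomial.mem_support_iff, hg1, MvPolynomial.coeff_sub] at ht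
      by_cases h1 : MvPolynomial.coeff t g₀ ≠ 0
      · exact hg t (MvPolynomial.mem_support_iff.mpr h1)
      · push_neg at h1
        rw [h1, zero_sub, neg_ne_zero] at ht
        rcases supp_mono_mul_marked hF ha ht with rfl | ⟨γ, hγ, rfl⟩
        · exact hBh
        · exact hB a ha η hη γ hγ hBh
    obtain ⟨hinv, hmem⟩ := ih hg1supp
    refine ⟨hinv, ?_⟩
    have hdecomp : g₀ - h = (monomial η (MvPolynomial.coeff (a + η) g₀) * F a) + (g₁ - h) := by
      rw [hg1]; ring
    rw [hdecomp]
    exact Submodule.add_mem _ (gen_mem_tauSpanB ha hη hBh _) hmem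

lemma redstar_sub_mem (hF : IsMarkedSet 𝒥 F) {g h : MvPolynomial (Fin n) A}
    (hred : RedStar 𝒥 F g h) : g - h ∈ tauSpan 𝒥 𝒥.tau F := by
  have := (redstar_bounded hF (fun _ => True)
      (fun _ _ _ _ _ _ _ => trivial) hred (fun _ _ => trivial)).2
  exact tauSpanB_le_tauSpan _ this


/-- One reduction step strictly decreases the multiset of `φ`-values of the support. -/
lemma mu_decrease {W : Type} {lt : W → W → Prop} {φ : Term n → W}
    (hφ : ∀ α ∈ 𝒥.M, ∀ γ ∈ 𝒥.lam α, ∀ η ∈ 𝒥.tau α, lt (φ (γ + η)) (φ (α + η)))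
    (hF : IsMarkedSet 𝒥 F) {g h : MvPolynomial (Fin n) A} (hstep : Red 𝒥 F g h) :
    Relation.TransGen (Relation.CutExpand lt)
      (h.support.val.map φ) (g.support.val.map φ) := by
  classical
  obtain ⟨a, ha, η, hη, hc, rfl⟩ := hstep
  set m : MvPolynomial (Fin n) A := monomial η (MvPolynomial.coeff (a + η) g) * F a with hm
  set Dl : Finset (Term n) := (𝒥.lam a).image (fun γ => γ + η) with hDl
  set D : Finset (Term n) := insert (a + η) Dl with hD
  have key1 : MvPolynomial.coeff (a + η) (g - m) = 0 := by
    rw [MvPolynomial.coeff_sub, hm, coeff_head hF ha, sub_self]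
  have key2 : ∀ t, t ≠ a + η → t ∉ Dl → MvPolynomial.coeff t m = 0 := by
    intro t h1 h2
    by_contra h0
    rcases supp_mono_mul_marked hF ha h0 with rfl | ⟨γ, hγ, rfl⟩
    · exact h1 rfl
    · exact h2 (Finset.mem_image.mpr ⟨γ, hγ, rfl⟩)
  have claim : (g - m).support.filter (fun t => t ∉ Dl)
      = g.support.filter (fun t => t ∉ D) := by
    ext t
    simp only [Finset.mem_filter, MvPolynomial.mem_support_iff, hD, Finset.mem_insert, not_or]
    constructor
    · rintro ⟨ht, htd⟩
      have tne : t ≠ a + η := by rintro rfl; exact ht key1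
      have h0 : MvPolynomial.coeff t m = 0 := key2 t tne htd
      rw [MvPolynomial.coeff_sub, h0, sub_zero] at ht
      exact ⟨ht, tne, htd⟩
    · rintro ⟨ht, tne, htd⟩
      have h0 : MvPolynomial.coeff t m = 0 := key2 t tne htd
      refine ⟨?_, htd⟩
      rw [MvPolynomial.coeff_sub, h0, sub_zero]
      exact ht
  have e1 : ((g.support.filter (fun t => t ∈ D)).val
      + (g.support.filter (fun t => t ∉ D)).val) = g.support.val := by
    simp only [Finset.filter_val]
    exact Multiset.filter_add_not _ _
  have e1h : (((g - m).support.filter (fun t => t ∈ Dl)).val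
      + ((g - m).support.filter (fun t => t ∉ Dl)).val) = (g - m).support.val := by
    simp only [Finset.filter_val]
    exact Multiset.filter_add_not _ _
  have haη : a + η ∈ g.support.filter (fun t => t ∈ D) :=
    Finset.mem_filter.mpr ⟨MvPolynomial.mem_support_iff.mpr hc, by simp [hD]⟩
  set X : Multiset W := ((g.support.filter (fun t => t ∉ D)).val).map φ with hX
  set Y' : Multiset W := (((g.support.filter (fun t => t ∈ D)).val).erase (a + η)).map φ
  set Z : Multiset W := (((g - m).support.filter (fun t => t ∈ Dl)).val).map φ with hZdef
  have hZ : ∀ z ∈ Z, lt z (φ (a + η)) := by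
    intro z hz
    obtain ⟨t, ht, rfl⟩ := Multiset.mem_map.mp hz
    obtain ⟨-, htD⟩ := Finset.mem_filter.mp (Finset.mem_val.mp ht)
    obtain ⟨γ, hγ, rfl⟩ := Finset.mem_image.mp htD
    exact hφ a ha γ hγ η hη
  have hg' : g.support.val.map φ = X + ({φ (a + η)} + Y') := by
    rw [← e1, Multiset.map_add]
    have e2 : (g.support.filter (fun t => t ∈ D)).val
        = (a + η) ::ₘ ((g.support.filter (fun t => t ∈ D)).val.erase (a + η)) :=
      (Multiset.cons_erase (Finset.mem_val.mpr haη)).symm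
    rw [e2, Multiset.map_cons, ← Multiset.singleton_add, add_comm]
  have hh' : (g - m).support.val.map φ = X + Z := by
    rw [← e1h, Multiset.map_add, claim, add_comm]
  rw [hg', hh']
  exact transGen_cutExpand X Z (φ (a + η)) hZ Y'

/-- Every polynomial reduces to some reduced polynomial. -/
lemma exists_nf {W : Type} {lt : W → W → Prop} (hwf : WellFounded lt) {φ : Term n → W}
    (hφ : ∀ α ∈ 𝒥.M, ∀ γ ∈ 𝒥.lam α, ∀ η ∈ 𝒥.tau α, lt (φ (γ + η)) (φ (α + η)))
    (hF : IsMarkedSet 𝒥 F) (g : MvPolynomial (Fin n) A) :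
    ∃ l, RedStar 𝒥 F g l ∧ IsReducedPoly 𝒥 l := by
  have wfμ : WellFounded (fun h g : MvPolynomial (Fin n) A =>
      Relation.TransGen (Relation.CutExpand lt)
        (h.support.val.map φ) (g.support.val.map φ)) :=
    InvImage.wf _ (hwf.cutExpand.transGen)
  refine wfμ.induction
    (C := fun g => ∃ l, RedStar 𝒥 F g l ∧ IsReducedPoly 𝒥 l) g ?_
  intro g ih
  by_cases hred : IsReducedPoly 𝒥 g
  · exact ⟨g, Relation.ReflTransGen.refl, hred⟩
  · rw [IsReducedPoly] at hred
    push_neg at hred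
    obtain ⟨β, hβs, hβJ⟩ := hred
    have hβJ' : ∃ α ∈ 𝒥.M, ∃ η, β = α + η := hβJ
    obtain ⟨a, ha, η, hη, rfl⟩ := (𝒥.cover β).1 hβJ'
    have hc : MvPolynomial.coeff (a + η) g ≠ 0 := MvPolynomial.mem_support_iff.mp hβs
    have hstep : Red 𝒥 F g (g - monomial η (MvPolynomial.coeff (a + η) g) * F a) :=
      ⟨a, ha, η, hη, hc, rfl⟩
    obtain ⟨l, hl, hlred⟩ := ih _ (mu_decrease hφ hF hstep)
    exact ⟨l, Relation.ReflTransGen.head hstep hl, hlred⟩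


/-- Membership in `⟨N(J)⟩` implies the support avoids `J`. -/
lemma supp_of_mem_NJ {g : MvPolynomial (Fin n) A} (hg : g ∈ NJSpan 𝒥 A) :
    ∀ β ∈ g.support, β ∉ 𝒥.idealJ := by
  refine Submodule.span_induction ?_ ?_ ?_ ?_ hg
  · rintro p ⟨β0, hβ0, rfl⟩ β hβ
    have := MvPolynomial.mem_support_iff.mp hβ
    rw [MvPolynomial.coeff_monomial] at this
    by_cases hb : β0 = β
    · exact hb ▸ hβ0
    · rw [if_neg hb] at this; exact absurd rfl this
  · intro β hβ; simp at hβ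
  · intro x y _ _ hx hy β hβ
    rcases Finset.mem_union.mp (MvPolynomial.support_add hβ) with h | h
    · exact hx β h
    · exact hy β h
  · intro a x _ hx β hβ
    exact hx β (MvPolynomial.support_smul hβ)

/-- A polynomial supported outside `J` lies in `⟨N(J)⟩`. -/
lemma mem_NJ_of_supp {l : MvPolynomial (Fin n) A}
    (hl : ∀ β ∈ l.support, β ∉ 𝒥.idealJ) : l ∈ NJSpan 𝒥 A := by
  rw [MvPolynomial.as_sum l]
  refine Submodule.sum_mem _ ?_
  intro β hβ
  have h1 : (monomial β (MvPolynomial.coeff β l) : MvPolynomial (Fin n) A)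
      = (MvPolynomial.coeff β l) • monomial β (1 : A) := by
    rw [MvPolynomial.smul_monomial, smul_eq_mul, mul_one]
  rw [h1]
  exact Submodule.smul_mem _ _ (Submodule.subset_span ⟨β, hl β hβ, rfl⟩)

/-- L2: an element of `⟨τF⟩` supported outside `J` is zero. -/
lemma L2 {W : Type} {lt : W → W → Prop} (hso : IsStrictOrder W lt) {φ : Term n → W}
    (hφ : ∀ α ∈ 𝒥.M, ∀ γ ∈ 𝒥.lam α, ∀ η ∈ 𝒥.tau α, lt (φ (γ + η)) (φ (α + η)))
    (hd : 𝒥.hasDisjointCones) (hF : IsMarkedSet 𝒥 F)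
    {g : MvPolynomial (Fin n) A} (hg : g ∈ tauSpan 𝒥 𝒥.tau F)
    (hsupp : ∀ β ∈ g.support, β ∉ 𝒥.idealJ) : g = 0 := by
  classical
  rw [tauSpan, Submodule.mem_span_set] at hg
  obtain ⟨c, hcs, hcsum⟩ := hg
  rcases c.support.eq_empty_or_nonempty with hne | hne
  · rw [← hcsum, Finsupp.sum, hne, Finset.sum_empty]
  · exfalso
    have hex : ∀ p : MvPolynomial (Fin n) A, ∃ aη : Term n × Term n,
        p ∈ c.support → aη.1 ∈ 𝒥.M ∧ aη.2 ∈ 𝒥.tau aη.1 ∧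
          p = monomial aη.2 (1 : A) * F aη.1 := by
      intro p
      by_cases hp : p ∈ c.support
      · obtain ⟨a, ha, η, hη, hpe⟩ := hcs hp
        exact ⟨(a, η), fun _ => ⟨ha, hη, hpe⟩⟩
      · exact ⟨(0, 0), fun h => absurd h hp⟩
    choose aη haη using hex
    obtain ⟨p₀, hp₀, hmax⟩ := exists_maximal_image lt hso
      (fun p => φ ((aη p).1 + (aη p).2)) c.support hne
    obtain ⟨ha0, hη0, hp0e⟩ := haη p₀ hp₀
    set β : Term n := (aη p₀).1 + (aη p₀).2 with hβ
    have hβJ : β ∈ 𝒥.idealJ := ⟨(aη p₀).1, ha0, (aη p₀).2, rfl⟩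
    have hβ0 : MvPolynomial.coeff β g = 0 := by
      by_contra h
      exact hsupp β (MvPolynomial.mem_support_iff.mpr h) hβJ
    have hcoeff : MvPolynomial.coeff β g
        = ∑ p ∈ c.support, c p * MvPolynomial.coeff β p := by
      rw [← hcsum, Finsupp.sum, MvPolynomial.coeff_sum]
      refine Finset.sum_congr rfl fun p _ => ?_
      rw [MvPolynomial.coeff_smul, smul_eq_mul]
    have key : ∀ p ∈ c.support, p ≠ p₀ → c p * MvPolynomial.coeff β p = 0 := by
      intro p hp hne'
      obtain ⟨hap, hηp, hpe⟩ := haη p hp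
      suffices hz : MvPolynomial.coeff β p = 0 by rw [hz, mul_zero]
      by_contra hc0
      rw [hpe] at hc0
      obtain ⟨hle, hco⟩ := coeff_mono_mul_ne_zero hc0
      have hβsplit : (β - (aη p).2) + (aη p).2 = β := tsub_add_cancel_of_le hle
      rcases (hF _ hap).2 _ hco with hs | hs
      · -- head case: β is in both cones
        have hβ2 : β = (aη p).1 + (aη p).2 := by rw [← hβsplit, hs]
        by_cases haa : (aη p).1 = (aη p₀).1
        · have h2 : (aη p).2 = (aη p₀).2 := by
            have e1 : (aη p).1 + (aη p).2 = (aη p₀).1 + (aη p₀).2 := hβ2.symm.trans hβ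
            rw [haa] at e1
            exact add_left_cancel e1
          exact hne' (by rw [hpe, hp0e, haa, h2])
        · have hdis := hd (aη p).1 hap (aη p₀).1 ha0 haa
          have hmem : β ∈ 𝒥.cone (aη p).1 ∩ 𝒥.cone (aη p₀).1 :=
            ⟨⟨(aη p).2, hηp, hβ2⟩, ⟨(aη p₀).2, hη0, rfl⟩⟩
          rw [hdis] at hmem
          exact hmem
      · -- tail case: contradicts maximality
        have := hφ _ hap _ hs _ hηp
        rw [hβsplit] at this
        exact hmax p hp this
    have hβg : MvPolynomial.coeff β g = c p₀ * MvPolynomial.coeff β p₀ := by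
      rw [hcoeff]
      exact Finset.sum_eq_single p₀ key (fun h => absurd hp₀ h)
    have hβp0 : MvPolynomial.coeff β p₀ = 1 := by
      rw [hp0e, hβ, coeff_head hF ha0]
    rw [hβg, hβp0, mul_one] at hβ0
    exact Finsupp.mem_support_iff.mp hp₀ hβ0

lemma tauSpan_le_ideal :
    tauSpan 𝒥 𝒥.tau F
      ≤ Submodule.restrictScalars A (Ideal.span (F '' ↑𝒥.M)) := by
  refine Submodule.span_le.mpr ?_
  rintro p ⟨a, ha, η, hη, rfl⟩
  show monomial η (1 : A) * F a ∈ Ideal.span (F '' ↑𝒥.M)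
  exact Ideal.mul_mem_left _ _ (Ideal.subset_span ⟨a, ha, rfl⟩)


/-- The core lemma: every multiple of a marked polynomial with nonempty cone lies in
`⟨τF⟩`, assuming condition (b). -/
lemma coreQ {W : Type} {lt : W → W → Prop} (hso : IsStrictOrder W lt) (hwf : WellFounded lt)
    {φ : Term n → W}
    (hφ : ∀ α ∈ 𝒥.M, ∀ γ ∈ 𝒥.lam α, ∀ η ∈ 𝒥.tau α, lt (φ (γ + η)) (φ (α + η)))
    (hstab : StableOrderingFn lt φ) (hF : IsMarkedSet 𝒥 F) (hb : CondB 𝒥 F) :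
    ∀ β : Term n, ∀ a ∈ 𝒥.M, (𝒥.tau a).Nonempty → ∀ δ, a + δ = β →
      monomial δ (1 : A) * F a ∈ tauSpan 𝒥 𝒥.tau F := by
  intro β0
  refine (InvImage.wf φ hwf).induction (C := fun β => ∀ a ∈ 𝒥.M, (𝒥.tau a).Nonempty →
    ∀ δ, a + δ = β → monomial δ (1 : A) * F a ∈ tauSpan 𝒥 𝒥.tau F) β0 ?_
  clear β0
  intro β ih a ha hane δ hβ
  obtain ⟨a', ha', η', hη', heq⟩ := (𝒥.cover β).1 ⟨a, ha, δ, hβ.symm⟩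
  by_cases hcase : a' = a
  · subst hcase
    have hδ : δ = η' := add_left_cancel (hβ.trans heq)
    exact Submodule.subset_span ⟨a', ha', δ, hδ ▸ hη', rfl⟩
  · -- main case: reduce the S-polynomial of (a, a')
    have hab : a ≤ β := le_iff_exists_add.mpr ⟨δ, hβ.symm⟩
    have ha'b : a' ≤ β := le_iff_exists_add.mpr ⟨η', heq⟩
    have hLb : a ⊔ a' ≤ β := sup_le hab ha'b
    have haL : a ≤ a ⊔ a' := le_sup_left
    have ha'L : a' ≤ a ⊔ a' := le_sup_right
    have hη'eq : η' = β - a' := by rw [heq, add_tsub_cancel_left]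
    have hη0τ : (a ⊔ a') - a' ∈ 𝒥.tau a' :=
      𝒥.tau_orderIdeal a' ha' η' hη' _ (hη'eq ▸ tsub_le_tsub_right hLb a')
    have hLcone : a ⊔ a' ∈ 𝒥.cone a' := ⟨_, hη0τ, (add_tsub_cancel_of_le ha'L).symm⟩
    obtain ⟨η₁, hη₁⟩ := hane
    have h0τ : (0 : Term n) ∈ 𝒥.tau a := 𝒥.tau_orderIdeal a ha η₁ hη₁ 0 (zero_le)
    obtain ⟨l, hSl, hlred⟩ := exists_nf hwf hφ hF (SPoly F a a')
    have hl0 : l = 0 := hb a ha a' ha' hLcone l hlred hSl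
    rw [hl0] at hSl
    have hBclosed : ∀ a'' ∈ 𝒥.M, ∀ η ∈ 𝒥.tau a'', ∀ γ ∈ 𝒥.lam a'',
        (fun t => lt (φ t) (φ (a ⊔ a'))) (a'' + η) →
        (fun t => lt (φ t) (φ (a ⊔ a'))) (γ + η) :=
      fun a'' ha'' η hη γ hγ hb' => IsTrans.trans _ _ _ (hφ a'' ha'' γ hγ η hη) hb'
    have c1 : MvPolynomial.coeff (a ⊔ a') (monomial ((a ⊔ a') - a) (1 : A) * F a) = 1 := by
      have h := coeff_head hF ha ((a ⊔ a') - a) (1 : A)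
      rwa [add_tsub_cancel_of_le haL] at h
    have c2 : MvPolynomial.coeff (a ⊔ a') (monomial ((a ⊔ a') - a') (1 : A) * F a') = 1 := by
      have h := coeff_head hF ha' ((a ⊔ a') - a') (1 : A)
      rwa [add_tsub_cancel_of_le ha'L] at h
    have hSsupp : ∀ t ∈ (SPoly F a a').support, lt (φ t) (φ (a ⊔ a')) := by
      intro t ht
      have hco := MvPolynomial.mem_support_iff.mp ht
      rw [SPoly, MvPolynomial.coeff_sub] at hco
      have htL : t ≠ a ⊔ a' := by
        rintro rfl
        rw [c1, c2, sub_self] at hco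
        exact hco rfl
      by_cases h1 : MvPolynomial.coeff t (monomial ((a ⊔ a') - a) (1 : A) * F a) ≠ 0
      · rcases supp_mono_mul_marked hF ha h1 with h2 | ⟨γ, hγ, rfl⟩
        · exact absurd (h2.trans (add_tsub_cancel_of_le haL)) htL
        · have hlt0 : lt (φ γ) (φ a) := by
            have h := hφ a ha γ hγ 0 h0τ
            rwa [add_zero, add_zero] at h
          have h := (hstab a γ ((a ⊔ a') - a) hlt0).1
          rwa [add_tsub_cancel_of_le haL] at h
      · push_neg at h1
        rw [h1, zero_sub, neg_ne_zero] at hco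
        rcases supp_mono_mul_marked hF ha' hco with h2 | ⟨γ, hγ, rfl⟩
        · exact absurd (h2.trans (add_tsub_cancel_of_le ha'L)) htL
        · have h := hφ a' ha' γ hγ _ hη0τ
          rwa [add_tsub_cancel_of_le ha'L] at h
    have hSmem : SPoly F a a' ∈ tauSpanB 𝒥 F (fun t => lt (φ t) (φ (a ⊔ a'))) := by
      have h := (redstar_bounded hF _ hBclosed hSl hSsupp).2
      rwa [sub_zero] at h
    have hδeq : δ = β - a := by rw [← hβ, add_tsub_cancel_left]
    have hδε : ((a ⊔ a') - a) + (β - (a ⊔ a')) = δ := by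
      rw [add_comm, tsub_add_tsub_cancel hLb haL, hδeq]
    have hη'ε : ((a ⊔ a') - a') + (β - (a ⊔ a')) = η' := by
      rw [add_comm, tsub_add_tsub_cancel hLb ha'L, hη'eq]
    have hkey : monomial δ (1 : A) * F a
        = monomial η' (1 : A) * F a' + monomial (β - (a ⊔ a')) (1 : A) * SPoly F a a' := by
      rw [SPoly, mul_sub, ← mul_assoc, ← mul_assoc, MvPolynomial.monomial_mul,
        MvPolynomial.monomial_mul, one_mul]
      rw [show (β - (a ⊔ a')) + ((a ⊔ a') - a) = δ from by rw [add_comm]; exact hδε,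
        show (β - (a ⊔ a')) + ((a ⊔ a') - a') = η' from by rw [add_comm]; exact hη'ε]
      ring
    rw [hkey]
    refine Submodule.add_mem _ (Submodule.subset_span ⟨a', ha', η', hη', rfl⟩) ?_
    have hmap : monomial (β - (a ⊔ a')) (1 : A) * SPoly F a a'
        = (LinearMap.mulLeft A (monomial (β - (a ⊔ a')) (1 : A))) (SPoly F a a') := rfl
    rw [hmap]
    have hmem2 : (LinearMap.mulLeft A (monomial (β - (a ⊔ a')) (1 : A))) (SPoly F a a')
        ∈ (tauSpanB 𝒥 F (fun t => lt (φ t) (φ (a ⊔ a')))).map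
            (LinearMap.mulLeft A (monomial (β - (a ⊔ a')) (1 : A))) :=
      Submodule.mem_map_of_mem hSmem
    rw [tauSpanB, Submodule.map_span] at hmem2
    refine Submodule.span_le.mpr ?_ hmem2
    rintro p ⟨q, ⟨a₂, ha₂, η₂, hη₂, hB₂, rfl⟩, rfl⟩
    have hpe : (LinearMap.mulLeft A (monomial (β - (a ⊔ a')) (1 : A)))
        (monomial η₂ (1 : A) * F a₂)
        = monomial ((β - (a ⊔ a')) + η₂) (1 : A) * F a₂ := by
      show monomial (β - (a ⊔ a')) (1 : A) * (monomial η₂ (1 : A) * F a₂) = _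
      rw [← mul_assoc, MvPolynomial.monomial_mul, one_mul]
    rw [hpe]
    have hlt : lt (φ (a₂ + ((β - (a ⊔ a')) + η₂))) (φ β) := by
      have h1 := (hstab (a ⊔ a') (a₂ + η₂) (β - (a ⊔ a')) hB₂).1
      rw [add_tsub_cancel_of_le hLb] at h1
      have e : (a₂ + η₂) + (β - (a ⊔ a')) = a₂ + ((β - (a ⊔ a')) + η₂) := by
        rw [add_assoc, add_comm η₂ _]
      rwa [e] at h1
    exact ih _ hlt a₂ ha₂ ⟨η₂, hη₂⟩ _ rfl

/-- Every monomial multiple of a marked polynomial lies in `⟨τF⟩`, given (b). -/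
lemma L1 {W : Type} {lt : W → W → Prop} (hso : IsStrictOrder W lt) (hwf : WellFounded lt)
    {φ : Term n → W}
    (hφ : ∀ α ∈ 𝒥.M, ∀ γ ∈ 𝒥.lam α, ∀ η ∈ 𝒥.tau α, lt (φ (γ + η)) (φ (α + η)))
    (hstab : StableOrderingFn lt φ) (hF : IsMarkedSet 𝒥 F) (hb : CondB 𝒥 F) :
    ∀ a ∈ 𝒥.M, ∀ δ, monomial δ (1 : A) * F a ∈ tauSpan 𝒥 𝒥.tau F := by
  intro a ha δ
  by_cases hne : (𝒥.tau a).Nonempty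
  · exact coreQ hso hwf hφ hstab hF hb _ a ha hne δ rfl
  · obtain ⟨a'', ha'', η'', hη'', heq⟩ := (𝒥.cover a).1 ⟨a, ha, 0, (add_zero a).symm⟩
    have hsup : a ⊔ a'' = a := sup_eq_left.mpr (le_iff_exists_add.mpr ⟨η'', heq⟩)
    have hcone : a ⊔ a'' ∈ 𝒥.cone a'' := by rw [hsup]; exact ⟨η'', hη'', heq⟩
    obtain ⟨l, hSl, hlred⟩ := exists_nf hwf hφ hF (SPoly F a a'')
    have hl0 : l = 0 := hb a ha a'' ha'' hcone l hlred hSl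
    rw [hl0] at hSl
    have hSmem : SPoly F a a'' ∈ tauSpan 𝒥 𝒥.tau F := by
      have h := redstar_sub_mem hF hSl
      rwa [sub_zero] at h
    have hfa : F a = monomial η'' (1 : A) * F a'' + SPoly F a a'' := by
      rw [SPoly, hsup, tsub_self]
      have h2 : a - a'' = η'' := by rw [heq, add_tsub_cancel_left]
      rw [h2, MvPolynomial.monomial_zero', MvPolynomial.C_1, one_mul]
      ring
    have hFa : F a ∈ tauSpan 𝒥 𝒥.tau F := by
      rw [hfa]
      exact Submodule.add_mem _ (Submodule.subset_span ⟨a'', ha'', η'', hη'', rfl⟩) hSmem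
    have hmap : monomial δ (1 : A) * F a
        = (LinearMap.mulLeft A (monomial δ (1 : A))) (F a) := rfl
    rw [hmap]
    have hmem2 : (LinearMap.mulLeft A (monomial δ (1 : A))) (F a)
        ∈ (tauSpan 𝒥 𝒥.tau F).map (LinearMap.mulLeft A (monomial δ (1 : A))) :=
      Submodule.mem_map_of_mem hFa
    rw [tauSpan, Submodule.map_span] at hmem2
    refine Submodule.span_le.mpr ?_ hmem2
    rintro p ⟨q, ⟨a₂, ha₂, η₂, hη₂, rfl⟩, rfl⟩
    have hpe : (LinearMap.mulLeft A (monomial δ (1 : A))) (monomial η₂ (1 : A) * F a₂)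
        = monomial (δ + η₂) (1 : A) * F a₂ := by
      show monomial δ (1 : A) * (monomial η₂ (1 : A) * F a₂) = _
      rw [← mul_assoc, MvPolynomial.monomial_mul, one_mul]
    rw [hpe]
    exact coreQ hso hwf hφ hstab hF hb _ a₂ ha₂ ⟨η₂, hη₂⟩ _ rfl

lemma mul_mem_tauSpan {W : Type} {lt : W → W → Prop} (hso : IsStrictOrder W lt)
    (hwf : WellFounded lt) {φ : Term n → W}
    (hφ : ∀ α ∈ 𝒥.M, ∀ γ ∈ 𝒥.lam α, ∀ η ∈ 𝒥.tau α, lt (φ (γ + η)) (φ (α + η)))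
    (hstab : StableOrderingFn lt φ) (hF : IsMarkedSet 𝒥 F) (hb : CondB 𝒥 F)
    (f : MvPolynomial (Fin n) A) {x : MvPolynomial (Fin n) A}
    (hx : x ∈ tauSpan 𝒥 𝒥.tau F) : f * x ∈ tauSpan 𝒥 𝒥.tau F := by
  refine Submodule.span_induction ?_ ?_ ?_ ?_ hx
    (p := fun x _ => f * x ∈ tauSpan 𝒥 𝒥.tau F)
  · rintro q ⟨a₂, ha₂, η₂, hη₂, rfl⟩
    rw [MvPolynomial.as_sum f, Finset.sum_mul]
    refine Submodule.sum_mem _ ?_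
    intro v _
    have h1 : monomial v (MvPolynomial.coeff v f) * (monomial η₂ (1 : A) * F a₂)
        = (MvPolynomial.coeff v f) • (monomial (v + η₂) (1 : A) * F a₂) := by
      rw [← mul_assoc, MvPolynomial.monomial_mul, ← smul_mul_assoc,
        MvPolynomial.smul_monomial, smul_eq_mul]
    rw [h1]
    exact Submodule.smul_mem _ _ (L1 hso hwf hφ hstab hF hb a₂ ha₂ (v + η₂))
  · show f * 0 ∈ tauSpan 𝒥 𝒥.tau F
    rw [mul_zero]; exact Submodule.zero_mem _
  · intro x y _ _ hx hy
    show f * (x + y) ∈ tauSpan 𝒥 𝒥.tau F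
    rw [mul_add]; exact Submodule.add_mem _ hx hy
  · intro c x _ hx
    show f * (c • x) ∈ tauSpan 𝒥 𝒥.tau F
    rw [mul_smul_comm]; exact Submodule.smul_mem _ _ hx

lemma ideal_le_tauSpan {W : Type} {lt : W → W → Prop} (hso : IsStrictOrder W lt)
    (hwf : WellFounded lt) {φ : Term n → W}
    (hφ : ∀ α ∈ 𝒥.M, ∀ γ ∈ 𝒥.lam α, ∀ η ∈ 𝒥.tau α, lt (φ (γ + η)) (φ (α + η)))
    (hstab : StableOrderingFn lt φ) (hF : IsMarkedSet 𝒥 F) (hb : CondB 𝒥 F) :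
    Submodule.restrictScalars A (Ideal.span (F '' ↑𝒥.M)) ≤ tauSpan 𝒥 𝒥.tau F := by
  intro x hx
  have hx' : x ∈ Ideal.span (F '' ↑𝒥.M) := hx
  refine Submodule.span_induction ?_ ?_ ?_ ?_ hx'
    (p := fun x _ => x ∈ tauSpan 𝒥 𝒥.tau F)
  · rintro q ⟨a₂, ha₂, rfl⟩
    have h := L1 hso hwf hφ hstab hF hb a₂ (Finset.mem_coe.mp ha₂) 0
    rwa [MvPolynomial.monomial_zero', MvPolynomial.C_1, one_mul] at h
  · exact Submodule.zero_mem _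
  · intro x y _ _ hx hy
    exact Submodule.add_mem _ hx hy
  · intro f x _ hx
    have h : f • x = f * x := rfl
    rw [h]
    exact mul_mem_tauSpan hso hwf hφ hstab hF hb f hx

/-- (b) implies that `F` is a marked basis. -/
lemma big {W : Type} {lt : W → W → Prop} (hso : IsStrictOrder W lt)
    (hwf : WellFounded lt) {φ : Term n → W}
    (hφ : ∀ α ∈ 𝒥.M, ∀ γ ∈ 𝒥.lam α, ∀ η ∈ 𝒥.tau α, lt (φ (γ + η)) (φ (α + η)))
    (hstab : StableOrderingFn lt φ) (hd : 𝒥.hasDisjointCones)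
    (hF : IsMarkedSet 𝒥 F) (hb : CondB 𝒥 F) : IsMarkedBasis 𝒥 F := by
  constructor
  · refine Submodule.disjoint_def.mpr fun x hxI hxN => ?_
    exact L2 hso hφ hd hF (ideal_le_tauSpan hso hwf hφ hstab hF hb hxI)
      (supp_of_mem_NJ hxN)
  · rw [codisjoint_iff, eq_top_iff]
    intro g _
    obtain ⟨l, hgl, hlred⟩ := exists_nf hwf hφ hF g
    have h1 : g - l ∈ Submodule.restrictScalars A (Ideal.span (F '' ↑𝒥.M)) :=
      tauSpan_le_ideal (redstar_sub_mem hF hgl)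
    have h2 : l ∈ NJSpan 𝒥 A := mem_NJ_of_supp hlred
    exact Submodule.mem_sup.mpr ⟨g - l, h1, l, h2, by ring⟩

lemma redstar_mem_ideal {g l : MvPolynomial (Fin n) A}
    (hgI : g ∈ Ideal.span (F '' ↑𝒥.M)) (hred : RedStar 𝒥 F g l) :
    l ∈ Ideal.span (F '' ↑𝒥.M) := by
  induction hred with
  | refl => exact hgI
  | tail hrest hstep ih =>
    obtain ⟨a, ha, η, hη, hc, rfl⟩ := hstep
    exact Ideal.sub_mem _ ih
      (Ideal.mul_mem_left _ _ (Ideal.subset_span ⟨a, Finset.mem_coe.mpr ha, rfl⟩))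

/-- A marked basis reduces ideal elements only to `0`. -/
lemma basis_red_zero (hmb : IsMarkedBasis 𝒥 F) {g l : MvPolynomial (Fin n) A}
    (hgI : g ∈ Ideal.span (F '' ↑𝒥.M)) (hred : RedStar 𝒥 F g l)
    (hlred : IsReducedPoly 𝒥 l) : l = 0 :=
  Submodule.disjoint_def.mp hmb.disjoint l (redstar_mem_ideal hgI hred)
    (mem_NJ_of_supp hlred)

/-- Condition (c) implies condition (b). -/
lemma condC_to_condB (hF : IsMarkedSet 𝒥 F)
    (hc : ∀ α ∈ 𝒥.M, ∀ α' ∈ 𝒥.M, ∀ γ : Term n, γ + α = α ⊔ α' → (α ⊔ α') ∈ 𝒥.cone α' →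
      ∀ l : MvPolynomial (Fin n) A, IsReducedPoly 𝒥 l →
        RedStar 𝒥 F (monomial γ (1 : A) * F α) l → l = 0) :
    CondB 𝒥 F := by
  intro a ha a' ha' hL l hlred hSl
  rcases subsingleton_or_nontrivial A with hs | hn
  · ext m
    exact Subsingleton.elim _ _
  · obtain ⟨η₀, hη₀, hLe⟩ := hL
    have hγ : ((a ⊔ a') - a) + a = a ⊔ a' := tsub_add_cancel_of_le le_sup_left
    refine hc a ha a' ha' ((a ⊔ a') - a) hγ ⟨η₀, hη₀, hLe⟩ l hlred ?_
    refine Relation.ReflTransGen.head ?_ hSl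
    have hcoeff : MvPolynomial.coeff (a' + η₀)
        (monomial ((a ⊔ a') - a) (1 : A) * F a) = 1 := by
      rw [← hLe, coeff_monomial_mul', if_pos tsub_le_self,
        tsub_tsub_cancel_of_le le_sup_left, (hF a ha).1, mul_one]
    have hη0eq : (a ⊔ a') - a' = η₀ := by rw [hLe, add_tsub_cancel_left]
    refine ⟨a', ha', η₀, hη₀, ?_, ?_⟩
    · rw [hcoeff]; exact one_ne_zero
    · rw [hcoeff, SPoly, hη0eq]

end Red

end Stmt15Aux
/-- over a noetherian RS with disjoint cones whose ordering function is
stable, `F` is a marked basis iff the relevant S-polynomials reduce to `0`, iff the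
corresponding multiples `x^γ f_α` reduce to `0`. -/
theorem stmt15 {n : ℕ} {A : Type} [CommRing A] (𝒥 : RedStruct n)
    (W : Type) (lt : W → W → Prop) (φ : Term n → W)
    (hso : IsStrictOrder W lt) (hwf : WellFounded lt)
    (hφ : ∀ α ∈ 𝒥.M, ∀ γ ∈ 𝒥.lam α, ∀ η ∈ 𝒥.tau α, lt (φ (γ + η)) (φ (α + η)))
    (hstab : StableOrderingFn lt φ) (hd : 𝒥.hasDisjointCones)
    (F : Term n → MvPolynomial (Fin n) A) (hF : IsMarkedSet 𝒥 F) :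
    (IsMarkedBasis 𝒥 F ↔
      ∀ α ∈ 𝒥.M, ∀ α' ∈ 𝒥.M, (α ⊔ α') ∈ 𝒥.cone α' →
        ∀ l : MvPolynomial (Fin n) A, IsReducedPoly 𝒥 l →
          RedStar 𝒥 F (SPoly F α α') l → l = 0) ∧
    (IsMarkedBasis 𝒥 F ↔
      ∀ α ∈ 𝒥.M, ∀ α' ∈ 𝒥.M, ∀ γ : Term n, γ + α = α ⊔ α' → (α ⊔ α') ∈ 𝒥.cone α' →
        ∀ l : MvPolynomial (Fin n) A, IsReducedPoly 𝒥 l →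
          RedStar 𝒥 F (MvPolynomial.monomial γ (1 : A) * F α) l → l = 0) := by

  constructor
  · constructor
    · intro hmb a ha a' ha' hL l hlred hSl
      refine Stmt15Aux.basis_red_zero hmb ?_ hSl hlred
      have h1 : MvPolynomial.monomial ((a ⊔ a') - a) (1 : A) * F a
          ∈ Ideal.span (F '' ↑𝒥.M) :=
        Ideal.mul_mem_left _ _ (Ideal.subset_span ⟨a, Finset.mem_coe.mpr ha, rfl⟩)
      have h2 : MvPolynomial.monomial ((a ⊔ a') - a') (1 : A) * F a'
          ∈ Ideal.span (F '' ↑𝒥.M) :=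
        Ideal.mul_mem_left _ _ (Ideal.subset_span ⟨a', Finset.mem_coe.mpr ha', rfl⟩)
      rw [SPoly]
      exact Ideal.sub_mem _ h1 h2
    · exact fun hb => Stmt15Aux.big hso hwf hφ hstab hd hF hb
  · constructor
    · intro hmb a ha a' ha' γ hγ hL l hlred hred
      exact Stmt15Aux.basis_red_zero hmb
        (Ideal.mul_mem_left _ _ (Ideal.subset_span ⟨a, Finset.mem_coe.mpr ha, rfl⟩))
        hred hlred
    · intro hcnd
      exact Stmt15Aux.big hso hwf hφ hstab hd hF (Stmt15Aux.condC_to_condB hF hcnd)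
end

section
/- Let J be a zero-dimensional (Artinian) monomial semigroup ideal in the terms of n variables, i.e. N(J) := 𝒯 \ J is finite, and let B(J) be its border, enumerated as B(J) = {x^{α_1},…,x^{α_s}} in increasing order with respect to the lexicographic term order induced by x_1 < … < x_n. For each i set τ_{α_i} := {x^η ∈ 𝒯 : for all j > i, x^{α_j} does not divide x^{η+α_i}}. Then for every i, τ_{α_i} = 𝒯[μ_{α_i}], where μ_{α_i} is the set of Janet-multiplicative variables of x^{α_i} with respect to B(J) and 𝒯[μ_{α_i}] is the set of terms in the variables of μ_{α_i}; consequently B(J) is a Janet complete system. -/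
open MvPolynomial

variable {n : ℕ}

/-- Lexicographic order induced by `x_1 < … < x_n`: compare the exponent of the largest
variable where the two terms differ. -/
def lexLt {n : ℕ} (a b : Term n) : Prop :=
  ∃ j : Fin n, a j < b j ∧ ∀ i : Fin n, j < i → a i = b i

/-- The border `B(J) = (x_1 N(J) ∪ … ∪ x_n N(J)) \ N(J)` of a semigroup ideal `J`. -/
def border {n : ℕ} (J : Set (Term n)) : Set (Term n) :=
  {β | β ∈ J ∧ ∃ i : Fin n, ∃ γ : Term n, γ ∉ J ∧ β = γ + Finsupp.single i 1}

/-- The Janet-multiplicative variables of `x^α` with respect to a set `B` of terms: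
`x_j` is Janet-multiplicative iff no `x^β ∈ B` has the same exponents as `x^α` on the
variables above `x_j` and a larger exponent on `x_j`. -/
def janetMultVars {n : ℕ} (B : Set (Term n)) (α : Term n) : Set (Fin n) :=
  {j | ¬ ∃ β ∈ B, (∀ i : Fin n, j < i → β i = α i) ∧ α j < β j}

section Stmt19Aux

variable {n : ℕ}

private lemma memJ_of_le {J : Set (Term n)} (hJ : ∀ γ ∈ J, ∀ η : Term n, γ + η ∈ J)
    {a b : Term n} (ha : a ∈ J) (hab : a ≤ b) : b ∈ J := by
  have h := hJ a ha (b - a)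
  rwa [add_tsub_cancel_of_le hab] at h

private lemma sub_single_add {θ : Term n} {k : Fin n} (hk : θ k ≠ 0) :
    θ = (θ - Finsupp.single k 1) + Finsupp.single k 1 := by
  ext i
  rcases eq_or_ne k i with rfl | hik
  · simp only [Finsupp.add_apply, Finsupp.tsub_apply, Finsupp.single_eq_same]
    omega
  · simp [Finsupp.add_apply, Finsupp.tsub_apply, Finsupp.single_apply, hik]

private lemma exists_border_dvd {J : Set (Term n)} (hJ : ∀ γ ∈ J, ∀ η : Term n, γ + η ∈ J)
    (h0 : (0 : Term n) ∉ J) : ∀ θ ∈ J, ∃ β ∈ border J, β ≤ θ := by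
  intro θ
  induction θ using WellFoundedLT.induction with
  | _ θ ih =>
    intro hθ
    have hθ0 : θ ≠ 0 := fun h => h0 (h ▸ hθ)
    obtain ⟨k, hk⟩ : ∃ k, θ k ≠ 0 := by
      by_contra hc; push_neg at hc; exact hθ0 (Finsupp.ext fun i => hc i)
    by_cases hJ' : θ - Finsupp.single k 1 ∈ J
    · have hlt : θ - Finsupp.single k 1 < θ := by
        refine lt_of_le_of_ne (Finsupp.le_def.2 fun i => ?_) ?_
        · rw [Finsupp.tsub_apply]; omega
        · intro h
          have h2 := congrArg (fun f : Term n => f k) h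
          simp only [Finsupp.tsub_apply, Finsupp.single_eq_same] at h2
          omega
      obtain ⟨β, hβ, hle⟩ := ih _ hlt hJ'
      exact ⟨β, hβ, hle.trans hlt.le⟩
    · exact ⟨θ, ⟨hθ, k, θ - Finsupp.single k 1, hJ', sub_single_add hk⟩, le_refl θ⟩

private lemma lexLt_total {a b : Term n} (h : a ≠ b) : lexLt a b ∨ lexLt b a := by
  classical
  set D : Finset (Fin n) := (a.support ∪ b.support).filter (fun i => a i ≠ b i) with hD
  have memD : ∀ i, a i ≠ b i → i ∈ D := by
    intro i hi
    refine Finset.mem_filter.2 ⟨?_, hi⟩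
    rcases eq_or_ne (a i) 0 with h0 | h0
    · exact Finset.mem_union_right _ (Finsupp.mem_support_iff.2 fun hb => hi (by rw [h0, hb]))
    · exact Finset.mem_union_left _ (Finsupp.mem_support_iff.2 h0)
  have hDne : D.Nonempty := by
    by_contra hc
    rw [Finset.not_nonempty_iff_eq_empty] at hc
    refine h (Finsupp.ext fun i => ?_)
    by_contra hne
    have := memD i hne
    simp [hc] at this
  set j := D.max' hDne with hj
  have hjD : j ∈ D := D.max'_mem hDne
  have habove : ∀ i, j < i → a i = b i := by
    intro i hi
    by_contra hne'
    exact absurd (D.le_max' i (memD i hne')) (not_le.2 hi)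
  have hjne : a j ≠ b j := (Finset.mem_filter.1 hjD).2
  rcases lt_or_gt_of_ne hjne with h1 | h1
  · exact Or.inl ⟨j, h1, habove⟩
  · exact Or.inr ⟨j, h1, fun i hi => (habove i hi).symm⟩

private def revFun (a : Term n) : Lex (Fin n → ℕ) := toLex (fun i => a i.rev)

private lemma lexLt_revFun {a b : Term n} (h : lexLt a b) : revFun a < revFun b := by
  obtain ⟨j, hj, habove⟩ := h
  refine ⟨j.rev, fun k hk => ?_, ?_⟩
  · exact habove k.rev (by simp only [Fin.lt_def, Fin.val_rev] at hk ⊢; omega)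
  · show a j.rev.rev < b j.rev.rev
    rwa [Fin.rev_rev]

private lemma exists_lex_max {S : Set (Term n)} (hfin : S.Finite) (hne : S.Nonempty) :
    ∃ m ∈ S, ∀ b ∈ S, ¬ lexLt m b := by
  obtain ⟨m, hm, hmax⟩ := Set.Finite.exists_maximalFor revFun S hfin hne
  refine ⟨m, hm, fun b hb hlt => ?_⟩
  have h1 := lexLt_revFun hlt
  have h2 := hmax hb (le_of_lt h1)
  exact absurd h2 (not_le_of_gt h1)

private lemma key_lemma {J : Set (Term n)} (hJ : ∀ γ ∈ J, ∀ η : Term n, γ + η ∈ J)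
    {α : Term n} (hα : α ∈ J) {i : Fin n}
    {β : Term n} (hβ : β ∈ border J) (hβa : ∀ k, i < k → β k = α k) (hβi : α i < β i) :
    ∃ δ ∈ border J, (∀ k, i < k → δ k = α k) ∧ δ i = α i + 1 ∧ ∀ k, k < i → δ k ≤ α k := by
  classical
  set S : Set (Term n) :=
    {δ | δ ∈ J ∧ (∀ k, i < k → δ k = α k) ∧ δ i = α i + 1 ∧ ∀ k, k < i → δ k ≤ α k} with hS
  have happ : ∀ k : Fin n, ((α + Finsupp.single i 1 : Term n)) k
      = α k + (if i = k then 1 else 0) := by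
    intro k; simp [Finsupp.add_apply, Finsupp.single_apply]
  have hSsub : S ⊆ Set.Iic (α + Finsupp.single i 1) := by
    rintro δ ⟨-, h1, h2, h3⟩
    refine Finsupp.le_def.2 fun k => ?_
    rw [happ k]
    rcases lt_trichotomy k i with hk | rfl | hk
    · rw [if_neg (by omega : ¬ i = k)]; have := h3 k hk; omega
    · rw [if_pos rfl]; omega
    · rw [if_neg (by omega : ¬ i = k)]; have := h1 k hk; omega
  have hSne : S.Nonempty := by
    refine ⟨α + Finsupp.single i 1, hJ α hα _, fun k hk => ?_, ?_, fun k hk => ?_⟩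
    · rw [happ k, if_neg (by omega : ¬ i = k)]; omega
    · rw [happ i, if_pos rfl]
    · rw [happ k, if_neg (by omega : ¬ i = k)]; omega
  obtain ⟨δ, hδS, hmin⟩ :=
    Set.Finite.exists_minimalFor id S ((Set.finite_Iic _).subset hSsub) hSne
  obtain ⟨hδJ, hδtop, hδi, hδlow⟩ := hδS
  have hmain : ∃ k, δ k ≠ 0 ∧ δ - Finsupp.single k 1 ∉ J := by
    by_contra hc
    push_neg at hc
    -- step 1 : all coordinates below i vanish
    have hzero : ∀ k, k < i → δ k = 0 := by
      intro k hk
      by_contra hk0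
      have hJ' : δ - Finsupp.single k 1 ∈ J := hc k hk0
      have hmem : δ - Finsupp.single k 1 ∈ S := by
        refine ⟨hJ', fun m hm => ?_, ?_, fun m hm => ?_⟩
        · rw [Finsupp.tsub_apply, Finsupp.single_apply, if_neg (by omega : ¬ k = m)]
          simpa using hδtop m hm
        · rw [Finsupp.tsub_apply, Finsupp.single_apply, if_neg (by omega : ¬ k = i)]
          simpa using hδi
        · rw [Finsupp.tsub_apply, Finsupp.single_apply]
          have := hδlow m hm
          split <;> omega
      have hle : δ - Finsupp.single k 1 ≤ δ := by
        refine Finsupp.le_def.2 fun m => ?_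
        rw [Finsupp.tsub_apply]; omega
      have heq := le_antisymm hle (hmin hmem hle)
      have h2 := congrArg (fun f : Term n => f k) heq
      simp only [id_eq, Finsupp.tsub_apply, Finsupp.single_eq_same] at h2
      omega
    obtain ⟨hβJ, j, γ, hγ, hβeq⟩ := hβ
    have hβapp : ∀ m, β m = γ m + (if j = m then 1 else 0) := by
      intro m; rw [hβeq]; simp [Finsupp.add_apply, Finsupp.single_apply]
    by_cases hji : i < j
    · -- the top witness variable is above i
      have hδj : δ j ≠ 0 := by
        have h1 : β j = γ j + 1 := by rw [hβapp j, if_pos rfl]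
        have h2 := hβa j hji
        have h3 := hδtop j hji
        omega
      have hJ' : δ - Finsupp.single j 1 ∈ J := hc j hδj
      have hle : δ - Finsupp.single j 1 ≤ γ := by
        refine Finsupp.le_def.2 fun m => ?_
        rw [Finsupp.tsub_apply, Finsupp.single_apply]
        rcases lt_trichotomy m i with hm | rfl | hm
        · rw [hzero m hm, if_neg (by omega : ¬ j = m)]; omega
        · have h1 := hβapp m
          rw [if_neg (by omega : ¬ j = m)] at h1
          rw [if_neg (by omega : ¬ j = m)]
          omega
        · have h1 := hβapp m
          have h2 := hβa m hm
          have h3 := hδtop m hm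
          split at h1 <;> split <;> omega
      exact hγ (memJ_of_le hJ hJ' hle)
    · -- the top witness variable is at or below i
      have hδine : δ i ≠ 0 := by omega
      have hJ' : δ - Finsupp.single i 1 ∈ J := hc i hδine
      have hle : δ - Finsupp.single i 1 ≤ γ := by
        refine Finsupp.le_def.2 fun m => ?_
        rw [Finsupp.tsub_apply, Finsupp.single_apply]
        rcases lt_trichotomy m i with hm | rfl | hm
        · rw [hzero m hm, if_neg (by omega : ¬ i = m)]; omega
        · have h1 := hβapp m
          rw [if_pos rfl]
          split at h1 <;> omega
        · have h1 := hβapp m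
          have h2 := hβa m hm
          have h3 := hδtop m hm
          rw [if_neg (by omega : ¬ i = m)]
          rw [if_neg (by omega : ¬ j = m)] at h1
          omega
      exact hγ (memJ_of_le hJ hJ' hle)
  obtain ⟨k, hk0, hknot⟩ := hmain
  exact ⟨δ, ⟨hδJ, k, δ - Finsupp.single k 1, hknot, sub_single_add hk0⟩, hδtop, hδi, hδlow⟩

private lemma not_le_of_mult {J : Set (Term n)} {α η : Term n}
    (hη : ∀ i : Fin n, η i ≠ 0 → i ∈ janetMultVars (border J) α)
    {β : Term n} (hβ : β ∈ border J) (hlt : lexLt α β) : ¬ β ≤ η + α := by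
  intro hle
  obtain ⟨j, hj, habove⟩ := hlt
  have hβj : β j ≤ η j + α j := by
    have := Finsupp.le_def.1 hle j
    simpa [Finsupp.add_apply] using this
  have hηj : η j ≠ 0 := by omega
  exact (hη j hηj) ⟨β, hβ, fun i hi => (habove i hi).symm, hj⟩

end Stmt19Aux

/-- for a zero-dimensional monomial semigroup ideal `J`, enumerating the
border `B(J)` increasingly w.r.t. lex and letting
`τ_α = {x^η : no lex-larger element of B(J) divides x^{η+α}}`, each `τ_α` is the set of
terms in the Janet-multiplicative variables of `x^α` w.r.t. `B(J)`; consequently `B(J)`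
is a Janet complete system. -/
theorem stmt19 {n : ℕ} (J : Set (Term n))
    (hJ : ∀ γ ∈ J, ∀ η : Term n, γ + η ∈ J)
    (hfin : (Jᶜ : Set (Term n)).Finite) :
    (∀ α ∈ border J,
      {η : Term n | ∀ β ∈ border J, lexLt α β → ¬ β ≤ η + α} =
        {η : Term n | ∀ i : Fin n, η i ≠ 0 → i ∈ janetMultVars (border J) α}) ∧
    ∀ γ : Term n, (∃ α ∈ border J, α ≤ γ) →
      ∃! p : Term n × Term n, p.1 ∈ border J ∧
        (∀ i : Fin n, p.2 i ≠ 0 → i ∈ janetMultVars (border J) p.1) ∧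
          γ = p.1 + p.2 := by
  constructor
  · -- Part 1: the two sets coincide
    intro α hα
    ext η
    simp only [Set.mem_setOf_eq]
    constructor
    · intro h1 i hi
      by_contra hmult
      simp only [janetMultVars, Set.mem_setOf_eq, not_not] at hmult
      obtain ⟨β, hβ, hab, hlt⟩ := hmult
      obtain ⟨δ, hδB, h1', h2', h3'⟩ := key_lemma hJ hα.1 hβ hab hlt
      refine h1 δ hδB ⟨i, by omega, fun k hk => (h1' k hk).symm⟩ ?_
      refine Finsupp.le_def.2 fun k => ?_
      have hadd : (η + α : Term n) k = η k + α k := by simp [Finsupp.add_apply]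
      rw [hadd]
      rcases lt_trichotomy k i with hk | rfl | hk
      · have := h3' k hk; omega
      · omega
      · have := h1' k hk; omega
    · intro h2 β hβ hlt
      exact not_le_of_mult h2 hβ hlt
  · -- Part 2: Janet completeness
    intro γ hdvd
    classical
    set S : Set (Term n) := {δ | δ ∈ border J ∧ δ ≤ γ} with hSdef
    have hfinS : S.Finite := (Set.finite_Iic γ).subset fun δ hδ => hδ.2
    obtain ⟨α0, hα0, hle0⟩ := hdvd
    obtain ⟨m, ⟨hmB, hmle⟩, hmax⟩ := exists_lex_max hfinS ⟨α0, hα0, hle0⟩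
    have hsup : ∀ i : Fin n, (γ - m) i ≠ 0 → i ∈ janetMultVars (border J) m := by
      intro i hi
      by_contra hmult
      simp only [janetMultVars, Set.mem_setOf_eq, not_not] at hmult
      obtain ⟨β, hβ, hab, hlt⟩ := hmult
      obtain ⟨δ, hδB, h1', h2', h3'⟩ := key_lemma hJ hmB.1 hβ hab hlt
      have hδle : δ ≤ γ := by
        refine Finsupp.le_def.2 fun k => ?_
        have hmk : m k ≤ γ k := Finsupp.le_def.1 hmle k
        rcases lt_trichotomy k i with hk | rfl | hk
        · have := h3' k hk; omega
        · have hik : (γ - m) k = γ k - m k := Finsupp.tsub_apply _ _ _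
          omega
        · have := h1' k hk; omega
      exact hmax δ ⟨hδB, hδle⟩ ⟨i, by omega, fun k hk => (h1' k hk).symm⟩
    have hγeq : γ = m + (γ - m) := (add_tsub_cancel_of_le hmle).symm
    refine ⟨(m, γ - m), ⟨hmB, hsup, hγeq⟩, ?_⟩
    rintro ⟨α₂, η₂⟩ ⟨hB2, hs2, he2⟩
    dsimp only at hB2 hs2 he2 ⊢
    have hαm : α₂ = m := by
      by_contra hne
      rcases lexLt_total hne with hlt | hlt
      · refine not_le_of_mult hs2 hmB hlt ?_
        rw [add_comm η₂ α₂, ← he2]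
        exact hmle
      · refine not_le_of_mult hsup hB2 hlt ?_
        rw [add_comm (γ - m) m, ← hγeq, he2]
        exact le_self_add
    have hηm : η₂ = γ - m := by
      have h1 : m + η₂ = m + (γ - m) := by rw [← hγeq, he2, hαm]
      exact add_left_cancel h1
    rw [Prod.mk.injEq]
    exact ⟨hαm, hηm⟩
end
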